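/- arXiv:1712.01940 — 2 statements merged into one kernel-verified Lean document; each statement's English description precedes it below -/
import Mathlib

section
/- Let r : D⊗D → D⊗D be a non-degenerate coalgebra automorphism that induces a non-degenerate set-theoretic solution r₀ of the braid equation on X×X. Let S = [g,h]×[i,j]×[k,l] ⊆ T = [a,b]×[c,d]×[e,f] be closed intervals of X³ as above, let (p,q,s) ∈ S, and let S₁ := [(g,i,k),(p,q,s)], T₁ := [(a,c,e),(p,q,s)], S₂ := [(p,q,s),(h,j,l)], T₂ := [(p,q,s),(b,d,f)] be the splitting of the inclusion S ⊆ T at (p,q,s). Then LBE(S,T) = LBE(S₁,T₁)·LBE(S₂,T₂) and RBE(S,T) = RBE(S₁,T₁)·RBE(S₂,T₂). -/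
open Finsupp

namespace BraidPaper

/-- The set of ordered pairs `Y = {(a,b) : a ≤ b}` indexing the basis of the
incidence coalgebra of `X`. -/
abbrev Y (X : Type) [PartialOrder X] : Type := {p : X × X // p.1 ≤ p.2}

/-- The incidence coalgebra `D` of `X`, modelled as the free `K`-module on `Y`. -/
abbrev Inc (K X : Type) [Field K] [PartialOrder X] : Type := Y X →₀ K

/-- `D ⊗ D`, modelled as the free `K`-module on `Y × Y`. -/
abbrev Inc2 (K X : Type) [Field K] [PartialOrder X] : Type := (Y X × Y X) →₀ K

/-- `D ⊗ D ⊗ D`, modelled as the free `K`-module on `Y × Y × Y`. -/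
abbrev Inc3 (K X : Type) [Field K] [PartialOrder X] : Type := (Y X × Y X × Y X) →₀ K

/-- `(D ⊗ D) ⊗ (D ⊗ D)`, modelled as the free `K`-module on `(Y × Y) × (Y × Y)`. -/
abbrev Inc4 (K X : Type) [Field K] [PartialOrder X] : Type :=
  ((Y X × Y X) × (Y X × Y X)) →₀ K

variable {K X : Type} [Field K] [PartialOrder X] [DecidableEq X]
  [@DecidableRel X X (· ≤ ·)] [LocallyFiniteOrder X]

/-- The coefficients `λ_{a|b|c|d}^{e|f|g|h}` of a linear endomorphism of `D ⊗ D`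
(defined to be `0` unless `a ≤ b`, `c ≤ d`, `e ≤ f` and `g ≤ h`). -/
noncomputable def lam (r : Inc2 K X →ₗ[K] Inc2 K X) (a b c d e f g h : X) : K :=
  if h1 : a ≤ b then if h2 : c ≤ d then if h3 : e ≤ f then if h4 : g ≤ h then
    (r (single (⟨(a, b), h1⟩, ⟨(c, d), h2⟩) 1)) (⟨(e, f), h3⟩, ⟨(g, h), h4⟩)
  else 0 else 0 else 0 else 0

/-- The counit of `D ⊗ D`. -/
noncomputable def eps2 : Inc2 K X →ₗ[K] K :=
  Finsupp.lsum K fun pq =>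
    if pq.1.1.1 = pq.1.1.2 ∧ pq.2.1.1 = pq.2.1.2 then LinearMap.id else 0

/-- The comultiplication of `D ⊗ D`. -/
noncomputable def comul2 : Inc2 K X →ₗ[K] Inc4 K X :=
  Finsupp.lsum K fun pq => LinearMap.toSpanSingleton K _ <|
    ∑ x ∈ (Finset.Icc pq.1.1.1 pq.1.1.2).attach,
      ∑ y ∈ (Finset.Icc pq.2.1.1 pq.2.1.2).attach,
        single ((⟨(pq.1.1.1, x.1), (Finset.mem_Icc.mp x.2).1⟩,
                 ⟨(pq.2.1.1, y.1), (Finset.mem_Icc.mp y.2).1⟩),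
                (⟨(x.1, pq.1.1.2), (Finset.mem_Icc.mp x.2).2⟩,
                 ⟨(y.1, pq.2.1.2), (Finset.mem_Icc.mp y.2).2⟩)) (1 : K)

/-- The tensor product `r ⊗ s` of two linear endomorphisms of `D ⊗ D`, in the
free-module model. -/
noncomputable def tmap (r s : Inc2 K X →ₗ[K] Inc2 K X) : Inc4 K X →ₗ[K] Inc4 K X :=
  Finsupp.lsum K fun pq => LinearMap.toSpanSingleton K _ <|
    (r (single pq.1 1)).sum fun p a => (s (single pq.2 1)).sum fun q b =>
      single (p, q) (a * b)

/-- `r` is a coalgebra automorphism of `D ⊗ D`. -/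
def IsCoalgAuto (r : Inc2 K X →ₗ[K] Inc2 K X) : Prop :=
  Function.Bijective ⇑r ∧ comul2 ∘ₗ r = tmap r r ∘ₗ comul2 ∧ eps2 ∘ₗ r = eps2

/-- `D ⊗ ε : D ⊗ D → D`. -/
noncomputable def rcu : Inc2 K X →ₗ[K] Inc K X :=
  Finsupp.lsum K fun pq => LinearMap.toSpanSingleton K _ <|
    if pq.2.1.1 = pq.2.1.2 then single pq.1 (1 : K) else 0

/-- `ε ⊗ D : D ⊗ D → D`. -/
noncomputable def lcu : Inc2 K X →ₗ[K] Inc K X :=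
  Finsupp.lsum K fun pq => LinearMap.toSpanSingleton K _ <|
    if pq.1.1.1 = pq.1.1.2 then single pq.2 (1 : K) else 0

/-- `(D ⊗ σ) ∘ (Δ ⊗ D)` where `σ := (D ⊗ ε) ∘ r`. -/
noncomputable def ndeg1 (r : Inc2 K X →ₗ[K] Inc2 K X) : Inc2 K X →ₗ[K] Inc2 K X :=
  Finsupp.lsum K fun pq => LinearMap.toSpanSingleton K _ <|
    ∑ x ∈ (Finset.Icc pq.1.1.1 pq.1.1.2).attach,
      ((rcu ∘ₗ r) (single ((⟨(x.1, pq.1.1.2), (Finset.mem_Icc.mp x.2).2⟩ : Y X), pq.2) 1)).sum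
        fun s a => single ((⟨(pq.1.1.1, x.1), (Finset.mem_Icc.mp x.2).1⟩ : Y X), s) a

/-- `(τ ⊗ D) ∘ (D ⊗ Δ)` where `τ := (ε ⊗ D) ∘ r`. -/
noncomputable def ndeg2 (r : Inc2 K X →ₗ[K] Inc2 K X) : Inc2 K X →ₗ[K] Inc2 K X :=
  Finsupp.lsum K fun pq => LinearMap.toSpanSingleton K _ <|
    ∑ y ∈ (Finset.Icc pq.2.1.1 pq.2.1.2).attach,
      ((lcu ∘ₗ r) (single (pq.1, (⟨(pq.2.1.1, y.1), (Finset.mem_Icc.mp y.2).1⟩ : Y X)) 1)).sum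
        fun s a => single (s, (⟨(y.1, pq.2.1.2), (Finset.mem_Icc.mp y.2).2⟩ : Y X)) a

/-- `r` is non-degenerate. -/
def NonDeg (r : Inc2 K X →ₗ[K] Inc2 K X) : Prop :=
  Function.Bijective ⇑(ndeg1 r) ∧ Function.Bijective ⇑(ndeg2 r)

/-- The set-map `r₀(a,c) = (ᵃc, aᶜ)` built from left translations `lt` (so
`ᵃc = lt a c`) and right translations `rt` (so `aᶜ = rt a c`). -/
def r0map (lt rt : X → X → X) : X × X → X × X := fun p => (lt p.1 p.2, rt p.1 p.2)

/-- The set-map `r₀` is non-degenerate. -/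
def NonDeg0 (lt rt : X → X → X) : Prop :=
  (∀ a : X, Function.Bijective (lt a)) ∧ (∀ c : X, Function.Bijective (fun a => rt a c))

def m12 (f : X × X → X × X) : X × X × X → X × X × X :=
  fun t => ((f (t.1, t.2.1)).1, (f (t.1, t.2.1)).2, t.2.2)

def m23 (f : X × X → X × X) : X × X × X → X × X × X := fun t => (t.1, f t.2)

/-- `f : X × X → X × X` is a set-theoretic solution of the braid equation. -/
def Braid0 (f : X × X → X × X) : Prop :=
  m12 f ∘ m23 f ∘ m12 f = m23 f ∘ m12 f ∘ m23 f

/-- `r` induces `r₀` on `X × X`. -/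
def Induces (r : Inc2 K X →ₗ[K] Inc2 K X) (lt rt : X → X → X) : Prop :=
  ∀ a c : X,
    r (single (⟨(a, a), le_refl a⟩, ⟨(c, c), le_refl c⟩) 1)
      = single (⟨(lt a c, lt a c), le_refl _⟩, ⟨(rt a c, rt a c), le_refl _⟩) 1

/-- `r ⊗ id` acting on `D ⊗ D ⊗ D`. -/
noncomputable def r12 (r : Inc2 K X →ₗ[K] Inc2 K X) : Inc3 K X →ₗ[K] Inc3 K X :=
  Finsupp.lsum K fun t => LinearMap.toSpanSingleton K _ <|
    (r (single (t.1, t.2.1) 1)).sum fun p a => single (p.1, p.2, t.2.2) a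

/-- `id ⊗ r` acting on `D ⊗ D ⊗ D`. -/
noncomputable def r23 (r : Inc2 K X →ₗ[K] Inc2 K X) : Inc3 K X →ₗ[K] Inc3 K X :=
  Finsupp.lsum K fun t => LinearMap.toSpanSingleton K _ <|
    (r (single t.2 1)).sum fun p a => single (t.1, p) a

/-- The braid equation `r₁₂ ∘ r₂₃ ∘ r₁₂ = r₂₃ ∘ r₁₂ ∘ r₂₃` on `D ⊗ D ⊗ D`. -/
def BraidEqR (r : Inc2 K X →ₗ[K] Inc2 K X) : Prop :=
  r12 r ∘ₗ r23 r ∘ₗ r12 r = r23 r ∘ₗ r12 r ∘ₗ r23 r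

/-- The height of the interval `[a,b]`: the length of its longest chain. -/
noncomputable def hgt (a b : X) : ℕ∞ := Set.chainHeight (Set.Icc a b) (· < ·) - 1

/-- `LBE(S,T)` for `T = [a,b]×[c,d]×[e,f] ⊇ S = [g,h]×[i,j]×[k,l]`. -/
noncomputable def LBE (r : Inc2 K X →ₗ[K] Inc2 K X) (lt rt : X → X → X)
    (a b c d e f g h i j k l : X) : K :=
  ∑ x ∈ Finset.Icc a g, ∑ y ∈ Finset.Icc h b, ∑ w ∈ Finset.Icc c i,
  ∑ z ∈ Finset.Icc j d, ∑ u ∈ Finset.Icc e k, ∑ v ∈ Finset.Icc l f,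
    lam r a b c d (lt a w) (lt a z) (rt x c) (rt y c) *
    lam r (rt x c) (rt y c) e f (lt (rt x c) u) (lt (rt x c) v)
      (rt (rt g c) e) (rt (rt h c) e) *
    lam r (lt a w) (lt a z) (lt (rt x c) u) (lt (rt x c) v)
      (lt a (lt c k)) (lt a (lt c l))
      (rt (lt a i) (lt (rt a i) e)) (rt (lt a j) (lt (rt a j) e))

/-- `RBE(S,T)` for `T = [a,b]×[c,d]×[e,f] ⊇ S = [g,h]×[i,j]×[k,l]`. -/
noncomputable def RBE (r : Inc2 K X →ₗ[K] Inc2 K X) (lt rt : X → X → X)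
    (a b c d e f g h i j k l : X) : K :=
  ∑ x ∈ Finset.Icc a g, ∑ y ∈ Finset.Icc h b, ∑ w ∈ Finset.Icc c i,
  ∑ z ∈ Finset.Icc j d, ∑ u ∈ Finset.Icc e k, ∑ v ∈ Finset.Icc l f,
    lam r c d e f (lt c u) (lt c v) (rt w e) (rt z e) *
    lam r a b (lt c u) (lt c v) (lt a (lt c k)) (lt a (lt c l))
      (rt x (lt c u)) (rt y (lt c u)) *
    lam r (rt x (lt c u)) (rt y (lt c u)) (rt w e) (rt z e)
      (lt (rt a (lt i e)) (rt i e)) (lt (rt a (lt j e)) (rt j e))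
      (rt (rt g c) e) (rt (rt h c) e)

/-- the height of `T = [a,b]×[c,d]×[e,f]`. -/
noncomputable def hgt3 (a b c d e f : X) : ℕ∞ := hgt a b + hgt c d + hgt e f

/-- `LSQ(S,T)` for `T = [a,b]×[c,d] ⊇ S = [e,f]×[g,h]`. -/
noncomputable def LSQ (r : Inc2 K X →ₗ[K] Inc2 K X) (lt rt : X → X → X)
    (a b c d e f g h : X) : K :=
  ∑ x ∈ Finset.Icc a e, ∑ y ∈ Finset.Icc f b, ∑ w ∈ Finset.Icc c g, ∑ z ∈ Finset.Icc h d,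
    lam r a b c d (lt a w) (lt a z) (rt x c) (rt y c) *
    lam r (lt a w) (lt a z) (rt x c) (rt y c)
      (lt (lt a w) (rt e c)) (lt (lt a w) (rt f c))
      (rt (lt a g) (rt x c)) (rt (lt a h) (rt x c))

/-- `RSQ(S,T)` for `T = [a,b]×[c,d] ⊇ S = [e,f]×[g,h]`. -/
def RSQ (K : Type) [Field K] (a b c d e f g h : X) : K :=
  (if a = e then (1 : K) else 0) * (if b = f then 1 else 0) *
  (if c = g then 1 else 0) * (if d = h then 1 else 0)

/-- the height of `T = [a,b]×[c,d]`. -/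
noncomputable def hgt2 (a b c d : X) : ℕ∞ := hgt a b + hgt c d

/-- `r` has set-type square. -/
def SetSq (r : Inc2 K X →ₗ[K] Inc2 K X) (lt rt : X → X → X) : Prop :=
  ∀ (a b c d : X) (hab : a ≤ b) (hcd : c ≤ d)
    (h1 : lt (lt a c) (rt a c) ≤ lt (lt a c) (rt b c))
    (h2 : rt (lt a c) (rt a c) ≤ rt (lt a d) (rt a c)),
    r (r (single (⟨(a, b), hab⟩, ⟨(c, d), hcd⟩) 1))
      = single (⟨(lt (lt a c) (rt a c), lt (lt a c) (rt b c)), h1⟩,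
                ⟨(rt (lt a c) (rt a c), rt (lt a d) (rt a c)), h2⟩) 1

/-- `r` has set-type square up to height 1. -/
def SetSq1 (r : Inc2 K X →ₗ[K] Inc2 K X) (lt rt : X → X → X) : Prop :=
  ∀ (a b c d : X) (hab : a ≤ b) (hcd : c ≤ d), hgt a b + hgt c d = 1 →
    ∀ (h1 : lt (lt a c) (rt a c) ≤ lt (lt a c) (rt b c))
      (h2 : rt (lt a c) (rt a c) ≤ rt (lt a d) (rt a c)),
    r (r (single (⟨(a, b), hab⟩, ⟨(c, d), hcd⟩) 1))
      = single (⟨(lt (lt a c) (rt a c), lt (lt a c) (rt b c)), h1⟩,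
                ⟨(rt (lt a c) (rt a c), rt (lt a d) (rt a c)), h2⟩) 1

/-- `α_r(c)(a,b)` (for translations given by poset automorphisms `φl`, `φr`). -/
noncomputable def alphaR (r : Inc2 K X →ₗ[K] Inc2 K X) (φl φr : X → X) (c a b : X) : K :=
  lam r a b c c (φl c) (φl c) (φr a) (φr b)

/-- `β_r(c)(a,b)`. -/
noncomputable def betaR (r : Inc2 K X →ₗ[K] Inc2 K X) (φl φr : X → X) (c a b : X) : K :=
  lam r a b c c (φl c) (φl c) (φr a) (φr a)

/-- `α_l(c)(a,b)`. -/
noncomputable def alphaL (r : Inc2 K X →ₗ[K] Inc2 K X) (φl φr : X → X) (c a b : X) : K :=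
  lam r c c a b (φl a) (φl b) (φr c) (φr c)

/-- `β_l(c)(a,b)`. -/
noncomputable def betaL (r : Inc2 K X →ₗ[K] Inc2 K X) (φl φr : X → X) (c a b : X) : K :=
  lam r c c a b (φl a) (φl a) (φr c) (φr c)

/-- `Γ_{a|b|c|d}`. -/
noncomputable def Gam (r : Inc2 K X →ₗ[K] Inc2 K X) (φl φr : X → X) (a b c d : X) : K :=
  lam r a b c d (φl c) (φl c) (φr a) (φr a)

/-- `X` is connected. -/
def Connected (X : Type) [PartialOrder X] : Prop :=
  ∀ x y : X, Relation.ReflTransGen (fun a b : X => a ≤ b ∨ b ≤ a) x y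



section Aux
set_option linter.unusedSectionVars false
set_option linter.unreachableTactic false
set_option linter.unusedTactic false
set_option maxHeartbeats 1000000

lemma lam_def (r : Inc2 K X →ₗ[K] Inc2 K X) {a b c d e f g h : X}
    (h1 : a ≤ b) (h2 : c ≤ d) (h3 : e ≤ f) (h4 : g ≤ h) :
    lam r a b c d e f g h
      = (r (single (⟨(a, b), h1⟩, ⟨(c, d), h2⟩) 1)) (⟨(e, f), h3⟩, ⟨(g, h), h4⟩) := by
  simp [lam, h1, h2, h3, h4]

lemma lam_ne_zero {r : Inc2 K X →ₗ[K] Inc2 K X} {a b c d e f g h : X}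
    (hne : lam r a b c d e f g h ≠ 0) : (a ≤ b) ∧ (c ≤ d) ∧ (e ≤ f) ∧ (g ≤ h) := by
  unfold lam at hne
  split_ifs at hne with h1 h2 h3 h4
  · exact ⟨h1, h2, h3, h4⟩
  all_goals simp at hne

lemma tensor_apply {ι κ : Type} [DecidableEq ι] [DecidableEq κ]
    (f : ι →₀ K) (g : κ →₀ K) (ij : ι × κ) :
    (f.sum fun p α => g.sum fun q β => Finsupp.single (p, q) (α * β)) ij
      = f ij.1 * g ij.2 := by
  classical
  obtain ⟨i, j⟩ := ij
  rw [Finsupp.sum_apply]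
  have inner : ∀ p α, (g.sum fun q β => Finsupp.single (p, q) (α * β)) ((i, j) : ι × κ)
      = if p = i then α * g j else 0 := by
    intro p α
    rw [Finsupp.sum_apply]
    by_cases hp : p = i
    · subst hp
      rw [if_pos rfl]
      have : (g.sum fun q β => (Finsupp.single (p, q) (α * β) : ι × κ →₀ K) (p, j))
          = g.sum fun q β => if q = j then α * β else 0 := by
        apply Finsupp.sum_congr
        intro q _
        rw [Finsupp.single_apply]
        simp [Prod.ext_iff]
      rw [this, Finsupp.sum_ite_eq' g j (fun _ β => α * β)]
      by_cases hj : j ∈ g.support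
      · rw [if_pos hj]
      · rw [if_neg hj, Finsupp.notMem_support_iff.mp hj, mul_zero]
    · rw [if_neg hp]
      have : (g.sum fun q β => (Finsupp.single (p, q) (α * β) : ι × κ →₀ K) (i, j))
          = g.sum fun _ _ => (0 : K) := by
        apply Finsupp.sum_congr
        intro q _
        rw [Finsupp.single_apply, if_neg]
        intro hc
        exact hp (congrArg Prod.fst hc)
      rw [this]; exact Finset.sum_const_zero
  have : (f.sum fun p α => (g.sum fun q β => (Finsupp.single (p, q) (α * β) : ι × κ →₀ K)) (i, j))
      = f.sum fun p α => if p = i then α * g j else 0 := by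
    apply Finsupp.sum_congr
    intro p _
    exact inner p _
  rw [this, Finsupp.sum_ite_eq' f i (fun _ α => α * g j)]
  by_cases hi : i ∈ f.support
  · rw [if_pos hi]
  · rw [if_neg hi, Finsupp.notMem_support_iff.mp hi, zero_mul]


lemma comul2_apply_split (μ : Inc2 K X) {e m f g n h : X}
    (hem : e ≤ m) (hmf : m ≤ f) (hgn : g ≤ n) (hnh : n ≤ h) :
    (comul2 μ) ((⟨(e, m), hem⟩, ⟨(g, n), hgn⟩), (⟨(m, f), hmf⟩, ⟨(n, h), hnh⟩))
      = μ (⟨(e, f), hem.trans hmf⟩, ⟨(g, h), hgn.trans hnh⟩) := by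
  classical
  set J : (Y X × Y X) × (Y X × Y X) :=
    ((⟨(e, m), hem⟩, ⟨(g, n), hgn⟩), (⟨(m, f), hmf⟩, ⟨(n, h), hnh⟩)) with hJ
  set t : Y X × Y X := (⟨(e, f), hem.trans hmf⟩, ⟨(g, h), hgn.trans hnh⟩) with ht
  have main : ∀ pq : Y X × Y X,
      (∑ x ∈ (Finset.Icc pq.1.1.1 pq.1.1.2).attach,
        ∑ y ∈ (Finset.Icc pq.2.1.1 pq.2.1.2).attach,
          (single ((⟨(pq.1.1.1, x.1), (Finset.mem_Icc.mp x.2).1⟩,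
                 ⟨(pq.2.1.1, y.1), (Finset.mem_Icc.mp y.2).1⟩),
                (⟨(x.1, pq.1.1.2), (Finset.mem_Icc.mp x.2).2⟩,
                 ⟨(y.1, pq.2.1.2), (Finset.mem_Icc.mp y.2).2⟩)) (1 : K))) J
      = if pq = t then 1 else 0 := by
    intro pq
    rw [Finset.sum_apply']
    by_cases hpq : pq = t
    · subst hpq
      rw [if_pos rfl]
      have hstep : ∀ x ∈ (Finset.Icc (e : X) f).attach,
          (∑ y ∈ (Finset.Icc (g : X) h).attach,
            (single ((⟨(e, x.1), (Finset.mem_Icc.mp x.2).1⟩,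
                 ⟨(g, y.1), (Finset.mem_Icc.mp y.2).1⟩),
                (⟨(x.1, f), (Finset.mem_Icc.mp x.2).2⟩,
                 ⟨(y.1, h), (Finset.mem_Icc.mp y.2).2⟩)) (1 : K)) : Inc4 K X) J
          = if x.1 = m then 1 else 0 := by
        intro x _
        rw [Finset.sum_apply']
        have : ∀ y ∈ (Finset.Icc (g : X) h).attach,
            ((single ((⟨(e, x.1), (Finset.mem_Icc.mp x.2).1⟩,
                 ⟨(g, y.1), (Finset.mem_Icc.mp y.2).1⟩),
                (⟨(x.1, f), (Finset.mem_Icc.mp x.2).2⟩,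
                 ⟨(y.1, h), (Finset.mem_Icc.mp y.2).2⟩)) (1 : K)) : Inc4 K X) J
            = if x.1 = m then (if y.1 = n then 1 else 0) else 0 := by
          intro y _
          rw [Finsupp.single_apply, hJ]
          simp only [Prod.ext_iff, Subtype.ext_iff, Prod.mk.injEq]
          by_cases hx : x.1 = m <;> by_cases hy : y.1 = n <;> simp [hx, hy]
        rw [Finset.sum_congr rfl this]
        by_cases hx : x.1 = m
        · rw [Finset.sum_congr rfl (fun y _ => if_pos hx), if_pos hx,
            Finset.sum_attach (Finset.Icc (g : X) h) (fun v => if v = n then (1 : K) else 0),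
            Finset.sum_ite_eq' (Finset.Icc (g : X) h) n (fun _ => (1 : K)),
            if_pos (Finset.mem_Icc.mpr ⟨hgn, hnh⟩)]
        · simp [hx]
      rw [Finset.sum_congr rfl hstep]
      have := Finset.sum_attach (Finset.Icc (e : X) f) (fun v => if v = m then (1 : K) else 0)
      rw [this, Finset.sum_ite_eq' (Finset.Icc (e : X) f) m (fun _ => (1 : K)),
        if_pos (Finset.mem_Icc.mpr ⟨hem, hmf⟩)]
    · rw [if_neg hpq]
      apply Finset.sum_eq_zero
      intro x _
      rw [Finset.sum_apply']
      apply Finset.sum_eq_zero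
      intro y _
      rw [Finsupp.single_apply, if_neg]
      intro hc
      apply hpq
      rw [hJ] at hc
      simp only [Prod.ext_iff, Subtype.ext_iff, Prod.mk.injEq] at hc
      rw [ht]
      simp only [Prod.ext_iff, Subtype.ext_iff, Prod.mk.injEq]
      exact ⟨⟨hc.1.1.1, hc.2.1.2⟩, ⟨hc.1.2.1, hc.2.2.2⟩⟩
  rw [comul2, Finsupp.lsum_apply, Finsupp.sum_apply]
  have : (μ.sum fun pq k =>
      ((LinearMap.toSpanSingleton K (Inc4 K X)
        (∑ x ∈ (Finset.Icc pq.1.1.1 pq.1.1.2).attach,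
          ∑ y ∈ (Finset.Icc pq.2.1.1 pq.2.1.2).attach,
            single ((⟨(pq.1.1.1, x.1), (Finset.mem_Icc.mp x.2).1⟩,
                 ⟨(pq.2.1.1, y.1), (Finset.mem_Icc.mp y.2).1⟩),
                (⟨(x.1, pq.1.1.2), (Finset.mem_Icc.mp x.2).2⟩,
                 ⟨(y.1, pq.2.1.2), (Finset.mem_Icc.mp y.2).2⟩)) (1 : K))) k) J)
      = μ.sum fun pq k => if pq = t then k else 0 := by
    apply Finsupp.sum_congr
    intro pq _
    rw [LinearMap.toSpanSingleton_apply, Finsupp.smul_apply, main pq, smul_eq_mul,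
      mul_ite, mul_one, mul_zero]
  rw [this, Finsupp.sum_ite_eq' μ t (fun _ k => k)]
  by_cases hti : t ∈ μ.support
  · rw [if_pos hti]
  · rw [if_neg hti, Finsupp.notMem_support_iff.mp hti]


lemma ciJ {r : Inc2 K X →ₗ[K] Inc2 K X} (hco : comul2 ∘ₗ r = tmap r r ∘ₗ comul2)
    {a b c d : X} (hab : a ≤ b) (hcd : c ≤ d) (J : (Y X × Y X) × (Y X × Y X)) :
    (comul2 (r (single (⟨(a, b), hab⟩, ⟨(c, d), hcd⟩) 1))) J
      = ∑ x ∈ (Finset.Icc a b).attach, ∑ w ∈ (Finset.Icc c d).attach,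
          (r (single (⟨(a, x.1), (Finset.mem_Icc.mp x.2).1⟩,
              ⟨(c, w.1), (Finset.mem_Icc.mp w.2).1⟩) 1)) J.1
          * (r (single (⟨(x.1, b), (Finset.mem_Icc.mp x.2).2⟩,
              ⟨(w.1, d), (Finset.mem_Icc.mp w.2).2⟩) 1)) J.2 := by
  have h0 := LinearMap.congr_fun hco (single (⟨(a, b), hab⟩, ⟨(c, d), hcd⟩) (1 : K))
  simp only [LinearMap.comp_apply] at h0
  rw [h0]
  have h1 : comul2 (single ((⟨(a, b), hab⟩, ⟨(c, d), hcd⟩) : Y X × Y X) (1 : K))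
      = ∑ x ∈ (Finset.Icc a b).attach, ∑ w ∈ (Finset.Icc c d).attach,
          single ((⟨(a, x.1), (Finset.mem_Icc.mp x.2).1⟩,
                   ⟨(c, w.1), (Finset.mem_Icc.mp w.2).1⟩),
                  (⟨(x.1, b), (Finset.mem_Icc.mp x.2).2⟩,
                   ⟨(w.1, d), (Finset.mem_Icc.mp w.2).2⟩)) (1 : K) := by
    rw [comul2, Finsupp.lsum_single, LinearMap.toSpanSingleton_apply, one_smul]
  rw [h1, map_sum, Finset.sum_apply']
  apply Finset.sum_congr rfl
  intro x _
  rw [map_sum, Finset.sum_apply']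
  apply Finset.sum_congr rfl
  intro w _
  rw [tmap, Finsupp.lsum_single, LinearMap.toSpanSingleton_apply, one_smul]
  exact tensor_apply _ _ J

lemma CI {r : Inc2 K X →ₗ[K] Inc2 K X} (hco : comul2 ∘ₗ r = tmap r r ∘ₗ comul2)
    {a b c d e f g h m n : X} (hab : a ≤ b) (hcd : c ≤ d)
    (hem : e ≤ m) (hmf : m ≤ f) (hgn : g ≤ n) (hnh : n ≤ h) :
    lam r a b c d e f g h
      = ∑ x ∈ Finset.Icc a b, ∑ w ∈ Finset.Icc c d,
          lam r a x c w e m g n * lam r x b w d m f n h := by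
  have h2 := comul2_apply_split (r (single (⟨(a, b), hab⟩, ⟨(c, d), hcd⟩) 1))
    hem hmf hgn hnh
  rw [ciJ hco hab hcd] at h2
  rw [lam_def r hab hcd (hem.trans hmf) (hgn.trans hnh), ← h2]
  have h3 : ∀ x ∈ (Finset.Icc a b).attach, ∀ w ∈ (Finset.Icc c d).attach,
      (r (single (⟨(a, x.1), (Finset.mem_Icc.mp x.2).1⟩,
          ⟨(c, w.1), (Finset.mem_Icc.mp w.2).1⟩) 1)) (⟨(e, m), hem⟩, ⟨(g, n), hgn⟩)
        * (r (single (⟨(x.1, b), (Finset.mem_Icc.mp x.2).2⟩,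
          ⟨(w.1, d), (Finset.mem_Icc.mp w.2).2⟩) 1)) (⟨(m, f), hmf⟩, ⟨(n, h), hnh⟩)
      = lam r a x.1 c w.1 e m g n * lam r x.1 b w.1 d m f n h := by
    intro x _ w _
    rw [lam_def r (Finset.mem_Icc.mp x.2).1 (Finset.mem_Icc.mp w.2).1 hem hgn,
      lam_def r (Finset.mem_Icc.mp x.2).2 (Finset.mem_Icc.mp w.2).2 hmf hnh]
  rw [Finset.sum_congr rfl (fun x hx => Finset.sum_congr rfl (fun w hw => h3 x hx w hw))]
  rw [Finset.sum_attach (Finset.Icc a b)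
    (fun v => ∑ w ∈ (Finset.Icc c d).attach, lam r a v c w.1 e m g n * lam r v b w.1 d m f n h)]
  apply Finset.sum_congr rfl
  intro x _
  exact Finset.sum_attach (Finset.Icc c d) (fun v => lam r a x c v e m g n * lam r x b v d m f n h)


lemma sum_two {ι N : Type} [DecidableEq ι] [AddCommMonoid N] (μ : ι →₀ K) (F : ι → K → N)
    (t1 t2 : ι) (hne : t1 ≠ t2) (h0 : ∀ i, F i 0 = 0)
    (hv : ∀ i, μ i ≠ 0 → F i (μ i) ≠ 0 → i = t1 ∨ i = t2) :
    μ.sum F = F t1 (μ t1) + F t2 (μ t2) := by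
  classical
  rw [Finsupp.sum]
  rw [← Finset.sum_filter_of_ne (s := μ.support) (f := fun i => F i (μ i))
      (p := fun i => i = t1 ∨ i = t2)
      (fun x hx hFx => hv x (Finsupp.mem_support_iff.mp hx) hFx)]
  have hsub : Finset.filter (fun i => i = t1 ∨ i = t2) μ.support ⊆ {t1, t2} := by
    intro x hx
    rcases Finset.mem_filter.mp hx with ⟨_, h | h⟩ <;> subst h <;> simp
  have hzero : ∀ x ∈ ({t1, t2} : Finset ι),
      x ∉ Finset.filter (fun i => i = t1 ∨ i = t2) μ.support → F x (μ x) = 0 := by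
    intro x hx hnx
    by_cases hxs : x ∈ μ.support
    · exact absurd (Finset.mem_filter.mpr ⟨hxs, by
        rcases Finset.mem_insert.mp hx with h | h
        · exact Or.inl h
        · exact Or.inr (Finset.mem_singleton.mp h)⟩) hnx
    · rw [Finsupp.notMem_support_iff.mp hxs]
      exact h0 x
  rw [Finset.sum_subset hsub hzero]
  exact Finset.sum_pair hne

lemma lam_gl {r : Inc2 K X →ₗ[K] Inc2 K X} {lt rt : X → X → X} (hind : Induces r lt rt)
    (a c : X) {e f g h : X} (h3 : e ≤ f) (h4 : g ≤ h) :
    lam r a a c c e f g h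
      = if e = lt a c ∧ f = lt a c ∧ g = rt a c ∧ h = rt a c then 1 else 0 := by
  rw [lam_def r le_rfl le_rfl h3 h4]
  have : r (single ((⟨(a, a), le_rfl⟩, ⟨(c, c), le_rfl⟩) : Y X × Y X) 1)
      = single ((⟨(lt a c, lt a c), le_rfl⟩, ⟨(rt a c, rt a c), le_rfl⟩) : Y X × Y X) 1 :=
    hind a c
  rw [this, Finsupp.single_apply]
  congr 1
  simp only [Prod.ext_iff, Subtype.ext_iff, Prod.mk.injEq, eq_iff_iff]
  constructor
  · rintro ⟨⟨h1, h2⟩, h5, h6⟩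
    exact ⟨h1.symm, h2.symm, h5.symm, h6.symm⟩
  · rintro ⟨h1, h2, h5, h6⟩
    exact ⟨⟨h1.symm, h2.symm⟩, h5.symm, h6.symm⟩

lemma lcu_single (W : Y X × Y X) (hd : W.1.1.1 = W.1.1.2) :
    lcu (single W (1 : K)) = single W.2 1 := by
  rw [lcu, Finsupp.lsum_single, LinearMap.toSpanSingleton_apply, one_smul, if_pos hd]

lemma rcu_single (W : Y X × Y X) (hd : W.2.1.1 = W.2.1.2) :
    rcu (single W (1 : K)) = single W.1 1 := by
  rw [rcu, Finsupp.lsum_single, LinearMap.toSpanSingleton_apply, one_smul, if_pos hd]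

lemma ndeg2_single (r : Inc2 K X →ₗ[K] Inc2 K X) (P : Y X) (c : X) :
    ndeg2 r (single ((P, ⟨(c, c), le_refl c⟩) : Y X × Y X) 1)
      = Finsupp.mapDomain (fun s => (s, (⟨(c, c), le_refl c⟩ : Y X)))
          (lcu (r (single ((P, ⟨(c, c), le_refl c⟩) : Y X × Y X) 1))) := by
  rw [ndeg2, Finsupp.lsum_single, LinearMap.toSpanSingleton_apply, one_smul]
  set G : X → Inc2 K X := fun v => if hv : v ∈ Finset.Icc c c then
      (((lcu ∘ₗ r) (single ((P, (⟨(c, v), (Finset.mem_Icc.mp hv).1⟩ : Y X)) : Y X × Y X) 1)).sum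
        fun s a => single ((s, (⟨(v, c), (Finset.mem_Icc.mp hv).2⟩ : Y X)) : Y X × Y X) a)
      else 0 with hG
  calc (∑ y ∈ (Finset.Icc c c).attach,
        (((lcu ∘ₗ r) (single ((P, (⟨(c, y.1), (Finset.mem_Icc.mp y.2).1⟩ : Y X)) : Y X × Y X) 1)).sum
          fun s a => single ((s, (⟨(y.1, c), (Finset.mem_Icc.mp y.2).2⟩ : Y X)) : Y X × Y X) a))
      = ∑ y ∈ (Finset.Icc c c).attach, G y.1 :=
        Finset.sum_congr rfl (fun y _ => by simp only [hG]; rw [dif_pos y.2])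
    _ = ∑ v ∈ Finset.Icc c c, G v := Finset.sum_attach _ G
    _ = G c := by rw [Finset.Icc_self, Finset.sum_singleton]
    _ = _ := by
        simp only [hG]
        rw [dif_pos (Finset.mem_Icc.mpr ⟨le_refl c, le_refl c⟩)]
        rfl

lemma ndeg1_single (r : Inc2 K X →ₗ[K] Inc2 K X) (a : X) (Q : Y X) :
    ndeg1 r (single (((⟨(a, a), le_refl a⟩ : Y X), Q) : Y X × Y X) 1)
      = Finsupp.mapDomain (fun s => ((⟨(a, a), le_refl a⟩ : Y X), s))
          (rcu (r (single (((⟨(a, a), le_refl a⟩ : Y X), Q) : Y X × Y X) 1))) := by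
  rw [ndeg1, Finsupp.lsum_single, LinearMap.toSpanSingleton_apply, one_smul]
  set G : X → Inc2 K X := fun v => if hv : v ∈ Finset.Icc a a then
      (((rcu ∘ₗ r) (single (((⟨(v, a), (Finset.mem_Icc.mp hv).2⟩ : Y X), Q) : Y X × Y X) 1)).sum
        fun s b => single (((⟨(a, v), (Finset.mem_Icc.mp hv).1⟩ : Y X), s) : Y X × Y X) b)
      else 0 with hG
  calc (∑ x ∈ (Finset.Icc a a).attach,
        (((rcu ∘ₗ r) (single (((⟨(x.1, a), (Finset.mem_Icc.mp x.2).2⟩ : Y X), Q) : Y X × Y X) 1)).sum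
          fun s b => single (((⟨(a, x.1), (Finset.mem_Icc.mp x.2).1⟩ : Y X), s) : Y X × Y X) b))
      = ∑ x ∈ (Finset.Icc a a).attach, G x.1 :=
        Finset.sum_congr rfl (fun x _ => by simp only [hG]; rw [dif_pos x.2])
    _ = ∑ v ∈ Finset.Icc a a, G v := Finset.sum_attach _ G
    _ = G a := by rw [Finset.Icc_self, Finset.sum_singleton]
    _ = _ := by
        simp only [hG]
        rw [dif_pos (Finset.mem_Icc.mpr ⟨le_refl a, le_refl a⟩)]
        rfl


lemma covL {r : Inc2 K X →ₗ[K] Inc2 K X} {lt rt : X → X → X}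
    (hco : comul2 ∘ₗ r = tmap r r ∘ₗ comul2) (hnd2 : Function.Injective ⇑(ndeg2 r))
    (hind : Induces r lt rt) {a b : X} (c : X) (hab : a ≤ b) (hne : a ≠ b)
    (hIcc : Finset.Icc a b = {a, b}) :
    lt a c = lt b c ∧ rt a c ≤ rt b c := by
  by_contra hcon
  have E : ∀ e f g h m n : X, e ≤ m → m ≤ f → g ≤ n → n ≤ h →
      lam r a b c c e f g h
        = lam r a a c c e m g n * lam r a b c c m f n h
          + lam r a b c c e m g n * lam r b b c c m f n h := by
    intro e f g h m n hem hmf hgn hnh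
    rw [CI hco hab (le_refl c) hem hmf hgn hnh, hIcc, Finset.sum_pair hne, Finset.Icc_self,
      Finset.sum_singleton, Finset.sum_singleton]
  have Hstart : ∀ e f g h : X, e ≤ f → g ≤ h → lam r a b c c e f g h ≠ 0 →
      ¬(e = lt b c ∧ f = lt b c ∧ g = rt b c ∧ h = rt b c) → e = lt a c ∧ g = rt a c := by
    intro e f g h hef hgh hne0 hnB
    by_contra hnA
    apply hne0
    have hE := E e f g h e g (le_refl e) hef (le_refl g) hgh
    rw [lam_gl hind a c (le_refl e) (le_refl g), lam_gl hind b c hef hgh] at hE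
    rw [if_neg, if_neg hnB, zero_mul, mul_zero, add_zero] at hE
    · exact hE
    · intro hx
      exact hnA ⟨hx.1, hx.2.2.1⟩
  have Hend : ∀ e f g h : X, e ≤ f → g ≤ h → lam r a b c c e f g h ≠ 0 →
      ¬(e = lt a c ∧ f = lt a c ∧ g = rt a c ∧ h = rt a c) → f = lt b c ∧ h = rt b c := by
    intro e f g h hef hgh hne0 hnA
    by_contra hnB
    apply hne0
    have hE := E e f g h f h hef (le_refl f) hgh (le_refl h)
    rw [lam_gl hind a c hef hgh, lam_gl hind b c (le_refl f) (le_refl h)] at hE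
    rw [if_neg hnA, if_neg, zero_mul, mul_zero, add_zero] at hE
    · exact hE
    · intro hx
      exact hnB ⟨hx.2.1, hx.2.2.2⟩
  have Hor : ∀ e f g h : X, e ≤ f → g ≤ h → lam r a b c c e f g h ≠ 0 → e = f →
      (e = lt a c ∧ f = lt a c ∧ g = rt a c ∧ h = rt a c) ∨
      (e = lt b c ∧ f = lt b c ∧ g = rt b c ∧ h = rt b c) := by
    intro e f g h hef hgh hne0 hdiag
    by_cases hB : e = lt b c ∧ f = lt b c ∧ g = rt b c ∧ h = rt b c
    · exact Or.inr hB
    by_cases hA : e = lt a c ∧ f = lt a c ∧ g = rt a c ∧ h = rt a c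
    · exact Or.inl hA
    exfalso
    have h1 := Hstart e f g h hef hgh hne0 hB
    have h2 := Hend e f g h hef hgh hne0 hA
    apply hcon
    constructor
    · rw [← h1.1, hdiag, h2.1]
    · rw [← h1.2, ← h2.2]
      exact hgh
  set η := r (single ((⟨(a, b), hab⟩, ⟨(c, c), le_refl c⟩) : Y X × Y X) 1) with hη
  set tA : Y X × Y X := (⟨(lt a c, lt a c), le_refl _⟩, ⟨(rt a c, rt a c), le_refl _⟩) with htA
  set tB : Y X × Y X := (⟨(lt b c, lt b c), le_refl _⟩, ⟨(rt b c, rt b c), le_refl _⟩) with htB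
  have htAB : tA ≠ tB := by
    intro hEq
    rw [htA, htB] at hEq
    simp only [Prod.ext_iff, Subtype.ext_iff, Prod.mk.injEq] at hEq
    exact hcon ⟨hEq.1.1, le_of_eq hEq.2.1⟩
  have hv' : ∀ pq, η pq ≠ 0 →
      (fun pq (k : K) => k • (if pq.1.1.1 = pq.1.1.2 then single pq.2 (1:K) else 0)) pq (η pq) ≠ 0 →
      pq = tA ∨ pq = tB := by
    intro pq hpq hF
    by_cases hd : pq.1.1.1 = pq.1.1.2
    · obtain ⟨⟨⟨e, f⟩, hef⟩, ⟨⟨g, h⟩, hgh⟩⟩ := pq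
      have hlam : lam r a b c c e f g h ≠ 0 := by
        rw [lam_def r hab (le_refl c) hef hgh, ← hη]
        exact hpq
      rcases Hor e f g h hef hgh hlam hd with hA | hB
      · left
        rw [htA]
        simp only [Prod.ext_iff, Subtype.ext_iff, Prod.mk.injEq]
        exact ⟨⟨hA.1, hA.2.1⟩, hA.2.2.1, hA.2.2.2⟩
      · right
        rw [htB]
        simp only [Prod.ext_iff, Subtype.ext_iff, Prod.mk.injEq]
        exact ⟨⟨hB.1, hB.2.1⟩, hB.2.2.1, hB.2.2.2⟩
    · exfalso
      apply hF
      simp only [if_neg hd, smul_zero]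
  have hlcu : lcu η = η tA • single tA.2 1 + η tB • single tB.2 1 := by
    have hrepr : lcu η = η.sum fun pq k =>
        k • (if pq.1.1.1 = pq.1.1.2 then single pq.2 (1:K) else 0) := by
      rw [lcu, Finsupp.lsum_apply]
      apply Finsupp.sum_congr
      intro pq _
      rw [LinearMap.toSpanSingleton_apply]
    rw [hrepr, sum_two η
        (fun pq (k : K) => k • (if pq.1.1.1 = pq.1.1.2 then single pq.2 (1:K) else 0))
        tA tB htAB (fun i => zero_smul K _) hv',
      if_pos (show tA.1.1.1 = tA.1.1.2 by rw [htA]),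
      if_pos (show tB.1.1.1 = tB.1.1.2 by rw [htB])]
  have hkey : ndeg2 r (single ((⟨(a, b), hab⟩, ⟨(c, c), le_refl c⟩) : Y X × Y X) 1
      - η tA • single ((⟨(a, a), le_refl a⟩, ⟨(c, c), le_refl c⟩) : Y X × Y X) 1
      - η tB • single ((⟨(b, b), le_refl b⟩, ⟨(c, c), le_refl c⟩) : Y X × Y X) 1) = 0 := by
    rw [map_sub, map_sub, map_smul, map_smul, ndeg2_single r (⟨(a, b), hab⟩) c,
      ndeg2_single r (⟨(a, a), le_refl a⟩) c, ndeg2_single r (⟨(b, b), le_refl b⟩) c,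
      hind a c, hind b c, lcu_single _ rfl, lcu_single _ rfl, ← hη, hlcu,
      Finsupp.mapDomain_add, Finsupp.mapDomain_smul, Finsupp.mapDomain_smul,
      Finsupp.mapDomain_single, Finsupp.mapDomain_single]
    rw [htA, htB]
    abel
  have hu0 := hnd2 (by rw [hkey, map_zero] :
    ndeg2 r (single ((⟨(a, b), hab⟩, ⟨(c, c), le_refl c⟩) : Y X × Y X) 1
      - η tA • single ((⟨(a, a), le_refl a⟩, ⟨(c, c), le_refl c⟩) : Y X × Y X) 1
      - η tB • single ((⟨(b, b), le_refl b⟩, ⟨(c, c), le_refl c⟩) : Y X × Y X) 1) = ndeg2 r 0)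
  have heval := DFunLike.congr_fun hu0 ((⟨(a, b), hab⟩, ⟨(c, c), le_refl c⟩) : Y X × Y X)
  rw [Finsupp.sub_apply, Finsupp.sub_apply, Finsupp.smul_apply, Finsupp.smul_apply,
    Finsupp.single_apply, Finsupp.single_apply, Finsupp.single_apply, if_pos rfl,
    if_neg, if_neg, smul_zero, smul_zero, sub_zero, sub_zero, Finsupp.zero_apply] at heval
  · exact one_ne_zero heval
  all_goals
    intro hx
    simp only [Prod.ext_iff, Subtype.ext_iff, Prod.mk.injEq] at hx
    first
      | exact hne hx.1.2
      | exact hne hx.1.1.symm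
      | exact hne hx.1.2.1
      | exact hne hx.1.1.1.symm


lemma covR {r : Inc2 K X →ₗ[K] Inc2 K X} {lt rt : X → X → X}
    (hco : comul2 ∘ₗ r = tmap r r ∘ₗ comul2) (hnd1 : Function.Injective ⇑(ndeg1 r))
    (hind : Induces r lt rt) {c d : X} (a : X) (hcd : c ≤ d) (hne : c ≠ d)
    (hIcc : Finset.Icc c d = {c, d}) :
    rt a c = rt a d ∧ lt a c ≤ lt a d := by
  by_contra hcon
  have E : ∀ e f g h m n : X, e ≤ m → m ≤ f → g ≤ n → n ≤ h →
      lam r a a c d e f g h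
        = lam r a a c c e m g n * lam r a a c d m f n h
          + lam r a a c d e m g n * lam r a a d d m f n h := by
    intro e f g h m n hem hmf hgn hnh
    rw [CI hco (le_refl a) hcd hem hmf hgn hnh, Finset.Icc_self, Finset.sum_singleton,
      hIcc, Finset.sum_pair hne]
  have Hstart : ∀ e f g h : X, e ≤ f → g ≤ h → lam r a a c d e f g h ≠ 0 →
      ¬(e = lt a d ∧ f = lt a d ∧ g = rt a d ∧ h = rt a d) → e = lt a c ∧ g = rt a c := by
    intro e f g h hef hgh hne0 hnB
    by_contra hnA
    apply hne0
    have hE := E e f g h e g (le_refl e) hef (le_refl g) hgh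
    rw [lam_gl hind a c (le_refl e) (le_refl g), lam_gl hind a d hef hgh] at hE
    rw [if_neg, if_neg hnB, zero_mul, mul_zero, add_zero] at hE
    · exact hE
    · intro hx
      exact hnA ⟨hx.1, hx.2.2.1⟩
  have Hend : ∀ e f g h : X, e ≤ f → g ≤ h → lam r a a c d e f g h ≠ 0 →
      ¬(e = lt a c ∧ f = lt a c ∧ g = rt a c ∧ h = rt a c) → f = lt a d ∧ h = rt a d := by
    intro e f g h hef hgh hne0 hnA
    by_contra hnB
    apply hne0
    have hE := E e f g h f h hef (le_refl f) hgh (le_refl h)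
    rw [lam_gl hind a c hef hgh, lam_gl hind a d (le_refl f) (le_refl h)] at hE
    rw [if_neg hnA, if_neg, zero_mul, mul_zero, add_zero] at hE
    · exact hE
    · intro hx
      exact hnB ⟨hx.2.1, hx.2.2.2⟩
  have Hor : ∀ e f g h : X, e ≤ f → g ≤ h → lam r a a c d e f g h ≠ 0 → g = h →
      (e = lt a c ∧ f = lt a c ∧ g = rt a c ∧ h = rt a c) ∨
      (e = lt a d ∧ f = lt a d ∧ g = rt a d ∧ h = rt a d) := by
    intro e f g h hef hgh hne0 hdiag
    by_cases hB : e = lt a d ∧ f = lt a d ∧ g = rt a d ∧ h = rt a d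
    · exact Or.inr hB
    by_cases hA : e = lt a c ∧ f = lt a c ∧ g = rt a c ∧ h = rt a c
    · exact Or.inl hA
    exfalso
    have h1 := Hstart e f g h hef hgh hne0 hB
    have h2 := Hend e f g h hef hgh hne0 hA
    apply hcon
    constructor
    · rw [← h1.2, hdiag, h2.2]
    · rw [← h1.1, ← h2.1]
      exact hef
  set η := r (single ((⟨(a, a), le_refl a⟩, ⟨(c, d), hcd⟩) : Y X × Y X) 1) with hη
  set tA : Y X × Y X := (⟨(lt a c, lt a c), le_refl _⟩, ⟨(rt a c, rt a c), le_refl _⟩) with htA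
  set tB : Y X × Y X := (⟨(lt a d, lt a d), le_refl _⟩, ⟨(rt a d, rt a d), le_refl _⟩) with htB
  have htAB : tA ≠ tB := by
    intro hEq
    rw [htA, htB] at hEq
    simp only [Prod.ext_iff, Subtype.ext_iff, Prod.mk.injEq] at hEq
    exact hcon ⟨hEq.2.1, le_of_eq hEq.1.1⟩
  have hv' : ∀ pq, η pq ≠ 0 →
      (fun pq (k : K) => k • (if pq.2.1.1 = pq.2.1.2 then single pq.1 (1:K) else 0)) pq (η pq) ≠ 0 →
      pq = tA ∨ pq = tB := by
    intro pq hpq hF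
    by_cases hd : pq.2.1.1 = pq.2.1.2
    · obtain ⟨⟨⟨e, f⟩, hef⟩, ⟨⟨g, h⟩, hgh⟩⟩ := pq
      have hlam : lam r a a c d e f g h ≠ 0 := by
        rw [lam_def r (le_refl a) hcd hef hgh, ← hη]
        exact hpq
      rcases Hor e f g h hef hgh hlam hd with hA | hB
      · left
        rw [htA]
        simp only [Prod.ext_iff, Subtype.ext_iff, Prod.mk.injEq]
        exact ⟨⟨hA.1, hA.2.1⟩, hA.2.2.1, hA.2.2.2⟩
      · right
        rw [htB]
        simp only [Prod.ext_iff, Subtype.ext_iff, Prod.mk.injEq]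
        exact ⟨⟨hB.1, hB.2.1⟩, hB.2.2.1, hB.2.2.2⟩
    · exfalso
      apply hF
      simp only [if_neg hd, smul_zero]
  have hrcu : rcu η = η tA • single tA.1 1 + η tB • single tB.1 1 := by
    have hrepr : rcu η = η.sum fun pq k =>
        k • (if pq.2.1.1 = pq.2.1.2 then single pq.1 (1:K) else 0) := by
      rw [rcu, Finsupp.lsum_apply]
      apply Finsupp.sum_congr
      intro pq _
      rw [LinearMap.toSpanSingleton_apply]
    rw [hrepr, sum_two η
        (fun pq (k : K) => k • (if pq.2.1.1 = pq.2.1.2 then single pq.1 (1:K) else 0))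
        tA tB htAB (fun i => zero_smul K _) hv',
      if_pos (show tA.2.1.1 = tA.2.1.2 by rw [htA]),
      if_pos (show tB.2.1.1 = tB.2.1.2 by rw [htB])]
  have hkey : ndeg1 r (single ((⟨(a, a), le_refl a⟩, ⟨(c, d), hcd⟩) : Y X × Y X) 1
      - η tA • single ((⟨(a, a), le_refl a⟩, ⟨(c, c), le_refl c⟩) : Y X × Y X) 1
      - η tB • single ((⟨(a, a), le_refl a⟩, ⟨(d, d), le_refl d⟩) : Y X × Y X) 1) = 0 := by
    rw [map_sub, map_sub, map_smul, map_smul, ndeg1_single r a (⟨(c, d), hcd⟩),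
      ndeg1_single r a (⟨(c, c), le_refl c⟩), ndeg1_single r a (⟨(d, d), le_refl d⟩),
      hind a c, hind a d, rcu_single _ rfl, rcu_single _ rfl, ← hη, hrcu,
      Finsupp.mapDomain_add, Finsupp.mapDomain_smul, Finsupp.mapDomain_smul,
      Finsupp.mapDomain_single, Finsupp.mapDomain_single]
    rw [htA, htB]
    abel
  have hu0 := hnd1 (by rw [hkey, map_zero] :
    ndeg1 r (single ((⟨(a, a), le_refl a⟩, ⟨(c, d), hcd⟩) : Y X × Y X) 1
      - η tA • single ((⟨(a, a), le_refl a⟩, ⟨(c, c), le_refl c⟩) : Y X × Y X) 1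
      - η tB • single ((⟨(a, a), le_refl a⟩, ⟨(d, d), le_refl d⟩) : Y X × Y X) 1) = ndeg1 r 0)
  have heval := DFunLike.congr_fun hu0 ((⟨(a, a), le_refl a⟩, ⟨(c, d), hcd⟩) : Y X × Y X)
  rw [Finsupp.sub_apply, Finsupp.sub_apply, Finsupp.smul_apply, Finsupp.smul_apply,
    Finsupp.single_apply, Finsupp.single_apply, Finsupp.single_apply, if_pos rfl,
    if_neg, if_neg, smul_zero, smul_zero, sub_zero, sub_zero, Finsupp.zero_apply] at heval
  · exact one_ne_zero heval
  all_goals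
    intro hx
    simp only [Prod.ext_iff, Subtype.ext_iff, Prod.mk.injEq] at hx
    first
      | exact hne hx.2.2
      | exact hne hx.2.1.symm
      | exact hne hx.2.2.2
      | exact hne hx.2.1.1.symm
      | exact hne hx.2.2.1.symm
      | exact hne hx.2.1.2


lemma chainL {r : Inc2 K X →ₗ[K] Inc2 K X} {lt rt : X → X → X}
    (hco : comul2 ∘ₗ r = tmap r r ∘ₗ comul2) (hnd2 : Function.Injective ⇑(ndeg2 r))
    (hind : Induces r lt rt) :
    ∀ (n : ℕ) {a b : X} (c : X), a ≤ b → (Finset.Icc a b).card ≤ n →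
      lt a c = lt b c ∧ rt a c ≤ rt b c := by
  intro n
  induction n with
  | zero =>
    intro a b c hab hcard
    exact absurd hcard (by
      simp only [not_le]
      exact Finset.card_pos.mpr ⟨a, Finset.mem_Icc.mpr ⟨le_refl a, hab⟩⟩)
  | succ n ih =>
    intro a b c hab hcard
    by_cases heq : a = b
    · subst heq
      exact ⟨rfl, le_refl _⟩
    have hbmem : b ∈ (Finset.Icc a b).erase a :=
      Finset.mem_erase.mpr ⟨Ne.symm heq, Finset.mem_Icc.mpr ⟨hab, le_refl b⟩⟩
    obtain ⟨m, hm, hmin⟩ : ∃ m ∈ ((Finset.Icc a b).erase a), ∀ x ∈ ((Finset.Icc a b).erase a), ¬ x < m := by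
      obtain ⟨m, hm⟩ := (((Finset.Icc a b).erase a) : Set X).toFinite.exists_minimal ⟨b, hbmem⟩
      exact ⟨m, hm.prop, fun x hx hlt => hm.not_lt (Finset.mem_coe.mpr hx) hlt⟩
    have hma : m ≠ a := (Finset.mem_erase.mp hm).1
    have hmI : m ∈ Finset.Icc a b := (Finset.mem_erase.mp hm).2
    have ham : a ≤ m := (Finset.mem_Icc.mp hmI).1
    have hmb : m ≤ b := (Finset.mem_Icc.mp hmI).2
    have hIcc : Finset.Icc a m = {a, m} := by
      apply Finset.Subset.antisymm
      · intro z hz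
        rcases Finset.mem_Icc.mp hz with ⟨haz, hzm⟩
        by_cases hza : z = a
        · subst hza
          exact Finset.mem_insert_self z {m}
        · have hzmem : z ∈ (Finset.Icc a b).erase a :=
            Finset.mem_erase.mpr ⟨hza, Finset.mem_Icc.mpr ⟨haz, hzm.trans hmb⟩⟩
          have hzm' : z = m := by
            by_contra hzm''
            exact hmin z hzmem (lt_of_le_of_ne hzm hzm'')
          subst hzm'
          exact Finset.mem_insert_of_mem (Finset.mem_singleton_self z)
      · intro z hz
        rcases Finset.mem_insert.mp hz with h | h
        · subst h
          exact Finset.mem_Icc.mpr ⟨le_refl z, ham⟩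
        · rw [Finset.mem_singleton.mp h]
          exact Finset.mem_Icc.mpr ⟨ham, le_refl m⟩
    have step := covL hco hnd2 hind c ham (Ne.symm hma) hIcc
    have hcard2 : (Finset.Icc m b).card ≤ n := by
      have hsub : Finset.Icc m b ⊆ Finset.Icc a b := Finset.Icc_subset_Icc ham (le_refl b)
      have hanotin : a ∉ Finset.Icc m b :=
        fun hcontra => hma (le_antisymm (Finset.mem_Icc.mp hcontra).1 ham)
      have hlt : (Finset.Icc m b).card < (Finset.Icc a b).card :=
        Finset.card_lt_card (Finset.ssubset_iff_subset_ne.mpr ⟨hsub,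
          fun hEq => hanotin (hEq ▸ Finset.mem_Icc.mpr ⟨le_refl a, hab⟩)⟩)
      omega
    have rest := ih c hmb hcard2
    exact ⟨step.1.trans rest.1, step.2.trans rest.2⟩

lemma chainR {r : Inc2 K X →ₗ[K] Inc2 K X} {lt rt : X → X → X}
    (hco : comul2 ∘ₗ r = tmap r r ∘ₗ comul2) (hnd1 : Function.Injective ⇑(ndeg1 r))
    (hind : Induces r lt rt) :
    ∀ (n : ℕ) {c d : X} (a : X), c ≤ d → (Finset.Icc c d).card ≤ n →
      rt a c = rt a d ∧ lt a c ≤ lt a d := by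
  intro n
  induction n with
  | zero =>
    intro c d a hcd hcard
    exact absurd hcard (by
      simp only [not_le]
      exact Finset.card_pos.mpr ⟨c, Finset.mem_Icc.mpr ⟨le_refl c, hcd⟩⟩)
  | succ n ih =>
    intro c d a hcd hcard
    by_cases heq : c = d
    · subst heq
      exact ⟨rfl, le_refl _⟩
    have hbmem : d ∈ (Finset.Icc c d).erase c :=
      Finset.mem_erase.mpr ⟨Ne.symm heq, Finset.mem_Icc.mpr ⟨hcd, le_refl d⟩⟩
    obtain ⟨m, hm, hmin⟩ : ∃ m ∈ ((Finset.Icc c d).erase c), ∀ x ∈ ((Finset.Icc c d).erase c), ¬ x < m := by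
      obtain ⟨m, hm⟩ := (((Finset.Icc c d).erase c) : Set X).toFinite.exists_minimal ⟨d, hbmem⟩
      exact ⟨m, hm.prop, fun x hx hlt => hm.not_lt (Finset.mem_coe.mpr hx) hlt⟩
    have hma : m ≠ c := (Finset.mem_erase.mp hm).1
    have hmI : m ∈ Finset.Icc c d := (Finset.mem_erase.mp hm).2
    have ham : c ≤ m := (Finset.mem_Icc.mp hmI).1
    have hmb : m ≤ d := (Finset.mem_Icc.mp hmI).2
    have hIcc : Finset.Icc c m = {c, m} := by
      apply Finset.Subset.antisymm
      · intro z hz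
        rcases Finset.mem_Icc.mp hz with ⟨haz, hzm⟩
        by_cases hza : z = c
        · subst hza
          exact Finset.mem_insert_self z {m}
        · have hzmem : z ∈ (Finset.Icc c d).erase c :=
            Finset.mem_erase.mpr ⟨hza, Finset.mem_Icc.mpr ⟨haz, hzm.trans hmb⟩⟩
          have hzm' : z = m := by
            by_contra hzm''
            exact hmin z hzmem (lt_of_le_of_ne hzm hzm'')
          subst hzm'
          exact Finset.mem_insert_of_mem (Finset.mem_singleton_self z)
      · intro z hz
        rcases Finset.mem_insert.mp hz with h | h
        · subst h
          exact Finset.mem_Icc.mpr ⟨le_refl z, ham⟩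
        · rw [Finset.mem_singleton.mp h]
          exact Finset.mem_Icc.mpr ⟨ham, le_refl m⟩
    have step := covR hco hnd1 hind a ham (Ne.symm hma) hIcc
    have hcard2 : (Finset.Icc m d).card ≤ n := by
      have hsub : Finset.Icc m d ⊆ Finset.Icc c d := Finset.Icc_subset_Icc ham (le_refl d)
      have hanotin : c ∉ Finset.Icc m d :=
        fun hcontra => hma (le_antisymm (Finset.mem_Icc.mp hcontra).1 ham)
      have hlt : (Finset.Icc m d).card < (Finset.Icc c d).card :=
        Finset.card_lt_card (Finset.ssubset_iff_subset_ne.mpr ⟨hsub,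
          fun hEq => hanotin (hEq ▸ Finset.mem_Icc.mpr ⟨le_refl c, hcd⟩)⟩)
      omega
    have rest := ih a hmb hcard2
    exact ⟨step.1.trans rest.1, step.2.trans rest.2⟩


lemma ite_one_ne {P : Prop} [Decidable P] (h : (if P then (1:K) else 0) ≠ 0) : P := by
  by_contra hn
  exact h (if_neg hn)

variable {r : Inc2 K X →ₗ[K] Inc2 K X} {lt rt : X → X → X}

lemma U1lem (hca : IsCoalgAuto r) (hnd : NonDeg r) (hind : Induces r lt rt)
    {a b : X} (hab : a ≤ b) (c : X) : lt a c = lt b c :=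
  (chainL hca.2.1 hnd.2.1 hind _ c hab le_rfl).1

lemma mR1lem (hca : IsCoalgAuto r) (hnd : NonDeg r) (hind : Induces r lt rt)
    {a b : X} (hab : a ≤ b) (c : X) : rt a c ≤ rt b c :=
  (chainL hca.2.1 hnd.2.1 hind _ c hab le_rfl).2

lemma U2lem (hca : IsCoalgAuto r) (hnd : NonDeg r) (hind : Induces r lt rt)
    {c d : X} (hcd : c ≤ d) (a : X) : rt a c = rt a d :=
  (chainR hca.2.1 hnd.1.1 hind _ a hcd le_rfl).1

lemma mL2lem (hca : IsCoalgAuto r) (hnd : NonDeg r) (hind : Induces r lt rt)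
    {c d : X} (hcd : c ≤ d) (a : X) : lt a c ≤ lt a d :=
  (chainR hca.2.1 hnd.1.1 hind _ a hcd le_rfl).2

lemma SL (hca : IsCoalgAuto r) (hnd : NonDeg r) (hind : Induces r lt rt) :
    ∀ (n : ℕ) {a b c d : X}, a ≤ b → c ≤ d →
      (Finset.Icc a b).card + (Finset.Icc c d).card ≤ n →
      ∀ {e f g h : X}, lam r a b c d e f g h ≠ 0 →
      lt a c ≤ e ∧ rt a c ≤ g ∧ f ≤ lt b d ∧ h ≤ rt b d := by
  intro n
  induction n with
  | zero =>
    intro a b c d hab hcd hcard e f g h hne0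
    exact absurd hcard (by
      simp only [not_le]
      have h1 : 0 < (Finset.Icc a b).card :=
        Finset.card_pos.mpr ⟨a, Finset.mem_Icc.mpr ⟨le_refl a, hab⟩⟩
      omega)
  | succ n ih =>
    intro a b c d hab hcd hcard e f g h hne0
    obtain ⟨-, -, hef, hgh⟩ := lam_ne_zero hne0
    have hlow : lt a c ≤ e ∧ rt a c ≤ g := by
      have hCI := CI hca.2.1 hab hcd (le_refl e) hef (le_refl g) hgh
      rw [hCI] at hne0
      obtain ⟨x, hx, hne1⟩ := Finset.exists_ne_zero_of_sum_ne_zero hne0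
      obtain ⟨w, hw, hne2⟩ := Finset.exists_ne_zero_of_sum_ne_zero hne1
      obtain ⟨hne2a, hne2b⟩ := mul_ne_zero_iff.mp hne2
      rcases Finset.mem_Icc.mp hx with ⟨hax, hxb⟩
      rcases Finset.mem_Icc.mp hw with ⟨hcw, hwd⟩
      by_cases hac : x = a ∧ w = c
      · obtain ⟨h1, h2⟩ := hac
        subst h1
        subst h2
        rw [lam_gl hind x w (le_refl e) (le_refl g)] at hne2a
        obtain ⟨he, -, hg, -⟩ := ite_one_ne hne2a
        exact ⟨le_of_eq he.symm, le_of_eq hg.symm⟩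
      · have hle1 : (Finset.Icc x b).card ≤ (Finset.Icc a b).card :=
          Finset.card_le_card (Finset.Icc_subset_Icc hax le_rfl)
        have hle2 : (Finset.Icc w d).card ≤ (Finset.Icc c d).card :=
          Finset.card_le_card (Finset.Icc_subset_Icc hcw le_rfl)
        have hstrict : (Finset.Icc x b).card < (Finset.Icc a b).card ∨
            (Finset.Icc w d).card < (Finset.Icc c d).card := by
          rcases not_and_or.mp hac with hxa | hwc
          · left
            apply Finset.card_lt_card
            refine Finset.ssubset_iff_subset_ne.mpr ⟨Finset.Icc_subset_Icc hax le_rfl, ?_⟩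
            intro hEq
            have : a ∈ Finset.Icc x b := hEq ▸ Finset.mem_Icc.mpr ⟨le_refl a, hab⟩
            exact hxa (le_antisymm (Finset.mem_Icc.mp this).1 hax)
          · right
            apply Finset.card_lt_card
            refine Finset.ssubset_iff_subset_ne.mpr ⟨Finset.Icc_subset_Icc hcw le_rfl, ?_⟩
            intro hEq
            have : c ∈ Finset.Icc w d := hEq ▸ Finset.mem_Icc.mpr ⟨le_refl c, hcd⟩
            exact hwc (le_antisymm (Finset.mem_Icc.mp this).1 hcw)
        have hcard2 : (Finset.Icc x b).card + (Finset.Icc w d).card ≤ n := by omega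
        have hIH := ih hxb hwd hcard2 hne2b
        constructor
        · calc lt a c = lt x c := U1lem hca hnd hind hax c
            _ ≤ lt x w := mL2lem hca hnd hind hcw x
            _ ≤ e := hIH.1
        · calc rt a c ≤ rt x c := mR1lem hca hnd hind hax c
            _ = rt x w := U2lem hca hnd hind hcw x
            _ ≤ g := hIH.2.1
    have hhigh : f ≤ lt b d ∧ h ≤ rt b d := by
      have hCI := CI hca.2.1 hab hcd hef (le_refl f) hgh (le_refl h)
      rw [hCI] at hne0
      obtain ⟨x, hx, hne1⟩ := Finset.exists_ne_zero_of_sum_ne_zero hne0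
      obtain ⟨w, hw, hne2⟩ := Finset.exists_ne_zero_of_sum_ne_zero hne1
      obtain ⟨hne2a, hne2b⟩ := mul_ne_zero_iff.mp hne2
      rcases Finset.mem_Icc.mp hx with ⟨hax, hxb⟩
      rcases Finset.mem_Icc.mp hw with ⟨hcw, hwd⟩
      by_cases hbd : x = b ∧ w = d
      · obtain ⟨h1, h2⟩ := hbd
        subst h1
        subst h2
        rw [lam_gl hind x w (le_refl f) (le_refl h)] at hne2b
        obtain ⟨-, hf, -, hh⟩ := ite_one_ne hne2b
        exact ⟨le_of_eq hf, le_of_eq hh⟩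
      · have hstrict : (Finset.Icc a x).card < (Finset.Icc a b).card ∨
            (Finset.Icc c w).card < (Finset.Icc c d).card := by
          rcases not_and_or.mp hbd with hxb' | hwd'
          · left
            apply Finset.card_lt_card
            refine Finset.ssubset_iff_subset_ne.mpr ⟨Finset.Icc_subset_Icc le_rfl hxb, ?_⟩
            intro hEq
            have : b ∈ Finset.Icc a x := hEq ▸ Finset.mem_Icc.mpr ⟨hab, le_refl b⟩
            exact hxb' (le_antisymm hxb (Finset.mem_Icc.mp this).2)
          · right
            apply Finset.card_lt_card
            refine Finset.ssubset_iff_subset_ne.mpr ⟨Finset.Icc_subset_Icc le_rfl hwd, ?_⟩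
            intro hEq
            have : d ∈ Finset.Icc c w := hEq ▸ Finset.mem_Icc.mpr ⟨hcd, le_refl d⟩
            exact hwd' (le_antisymm hwd (Finset.mem_Icc.mp this).2)
        have hle1 : (Finset.Icc a x).card ≤ (Finset.Icc a b).card :=
          Finset.card_le_card (Finset.Icc_subset_Icc le_rfl hxb)
        have hle2 : (Finset.Icc c w).card ≤ (Finset.Icc c d).card :=
          Finset.card_le_card (Finset.Icc_subset_Icc le_rfl hwd)
        have hcard2 : (Finset.Icc a x).card + (Finset.Icc c w).card ≤ n := by omega
        have hIH := ih hax hcw hcard2 hne2a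
        constructor
        · calc f ≤ lt x w := hIH.2.2.1
            _ = lt b w := U1lem hca hnd hind hxb w
            _ ≤ lt b d := mL2lem hca hnd hind hwd b
        · calc h ≤ rt x w := hIH.2.2.2
            _ ≤ rt b w := mR1lem hca hnd hind hxb w
            _ = rt b d := U2lem hca hnd hind hwd b
    exact ⟨hlow.1, hlow.2, hhigh.1, hhigh.2⟩

lemma SL' (hca : IsCoalgAuto r) (hnd : NonDeg r) (hind : Induces r lt rt)
    {a b c d e f g h : X} (hab : a ≤ b) (hcd : c ≤ d)
    (hne0 : lam r a b c d e f g h ≠ 0) :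
    lt a c ≤ e ∧ rt a c ≤ g ∧ f ≤ lt b d ∧ h ≤ rt b d :=
  SL hca hnd hind ((Finset.Icc a b).card + (Finset.Icc c d).card) hab hcd le_rfl hne0

lemma split1 (hca : IsCoalgAuto r) (hnd : NonDeg r) (hind : Induces r lt rt)
    (hnd0 : NonDeg0 lt rt) {a b c d p q E F G H : X}
    (hap : a ≤ p) (hpb : p ≤ b) (hcq : c ≤ q) (hqd : q ≤ d)
    (hE : E ≤ lt a q) (hF : lt a q ≤ F) (hG : G ≤ rt p c) (hH : rt p c ≤ H) :
    lam r a b c d E F G H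
      = lam r a p c q E (lt a q) G (rt p c) * lam r p b q d (lt a q) F (rt p c) H := by
  have kill : ∀ x ∈ Finset.Icc a b, ∀ w ∈ Finset.Icc c d, (x ≠ p ∨ w ≠ q) →
      lam r a x c w E (lt a q) G (rt p c) * lam r x b w d (lt a q) F (rt p c) H = 0 := by
    intro x hx w hw hne
    by_contra hne0
    obtain ⟨h1, h2⟩ := mul_ne_zero_iff.mp hne0
    rcases Finset.mem_Icc.mp hx with ⟨hax, hxb⟩
    rcases Finset.mem_Icc.mp hw with ⟨hcw, hwd⟩
    have s1 := SL' hca hnd hind hax hcw h1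
    have s2 := SL' hca hnd hind hxb hwd h2
    have hlteq : lt x w = lt a q := le_antisymm s2.1 s1.2.2.1
    have hrteq : rt x w = rt p c := le_antisymm s2.2.1 s1.2.2.2
    rcases hne with hxp | hwq
    · apply hxp
      apply (hnd0.2 c).1
      show rt x c = rt p c
      rw [U2lem hca hnd hind hcw x]
      exact hrteq
    · apply hwq
      apply (hnd0.1 a).1
      show lt a w = lt a q
      rw [U1lem hca hnd hind hax w]
      exact hlteq
  rw [CI hca.2.1 (hap.trans hpb) (hcq.trans hqd) hE hF hG hH]
  rw [Finset.sum_eq_single_of_mem p (Finset.mem_Icc.mpr ⟨hap, hpb⟩)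
      (fun x hx hxp => Finset.sum_eq_zero (fun w hw => kill x hx w hw (Or.inl hxp)))]
  rw [Finset.sum_eq_single_of_mem q (Finset.mem_Icc.mpr ⟨hcq, hqd⟩)
      (fun w hw hwq => kill p (Finset.mem_Icc.mpr ⟨hap, hpb⟩) w hw (Or.inr hwq))]


lemma braid_ids {lt rt : X → X → X} (hbr0 : Braid0 (r0map lt rt)) (a c e : X) :
    lt (lt a c) (lt (rt a c) e) = lt a (lt c e)
    ∧ rt (rt a c) e = rt (rt a (lt c e)) (rt c e) := by
  have h := congrFun hbr0 (a, (c, e))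
  simp only [Function.comp_apply, m12, m23, r0map, Prod.mk.injEq] at h
  exact ⟨h.1, h.2.2⟩

lemma sum6_factor {s1 s2 s3 t1 t2 t3 : Finset X} (A : X → X → X → K) (B : X → X → X → K) :
    (∑ x ∈ s1, ∑ y ∈ t1, ∑ w ∈ s2, ∑ z ∈ t2, ∑ u ∈ s3, ∑ v ∈ t3, A x w u * B y z v)
      = (∑ x ∈ s1, ∑ w ∈ s2, ∑ u ∈ s3, A x w u)
        * (∑ y ∈ t1, ∑ z ∈ t2, ∑ v ∈ t3, B y z v) := by
  have c1 : ∀ (F : X → X → K), ∀ sa sb : Finset X, (∑ i ∈ sa, ∑ j ∈ sb, F i j)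
      = ∑ j ∈ sb, ∑ i ∈ sa, F i j := fun F sa sb => Finset.sum_comm
  calc (∑ x ∈ s1, ∑ y ∈ t1, ∑ w ∈ s2, ∑ z ∈ t2, ∑ u ∈ s3, ∑ v ∈ t3, A x w u * B y z v)
      = ∑ y ∈ t1, ∑ x ∈ s1, ∑ w ∈ s2, ∑ z ∈ t2, ∑ u ∈ s3, ∑ v ∈ t3, A x w u * B y z v :=
        Finset.sum_comm
    _ = ∑ y ∈ t1, ∑ x ∈ s1, ∑ z ∈ t2, ∑ w ∈ s2, ∑ u ∈ s3, ∑ v ∈ t3, A x w u * B y z v :=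
        Finset.sum_congr rfl fun y _ => Finset.sum_congr rfl fun x _ => Finset.sum_comm
    _ = ∑ y ∈ t1, ∑ z ∈ t2, ∑ x ∈ s1, ∑ w ∈ s2, ∑ u ∈ s3, ∑ v ∈ t3, A x w u * B y z v :=
        Finset.sum_congr rfl fun y _ => Finset.sum_comm
    _ = ∑ y ∈ t1, ∑ z ∈ t2, ∑ x ∈ s1, ∑ w ∈ s2, ∑ v ∈ t3, ∑ u ∈ s3, A x w u * B y z v :=
        Finset.sum_congr rfl fun y _ => Finset.sum_congr rfl fun z _ =>
          Finset.sum_congr rfl fun x _ => Finset.sum_congr rfl fun w _ => Finset.sum_comm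
    _ = ∑ y ∈ t1, ∑ z ∈ t2, ∑ x ∈ s1, ∑ v ∈ t3, ∑ w ∈ s2, ∑ u ∈ s3, A x w u * B y z v :=
        Finset.sum_congr rfl fun y _ => Finset.sum_congr rfl fun z _ =>
          Finset.sum_congr rfl fun x _ => Finset.sum_comm
    _ = ∑ y ∈ t1, ∑ z ∈ t2, ∑ v ∈ t3, ∑ x ∈ s1, ∑ w ∈ s2, ∑ u ∈ s3, A x w u * B y z v :=
        Finset.sum_congr rfl fun y _ => Finset.sum_congr rfl fun z _ => Finset.sum_comm
    _ = _ := by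
        simp only [Finset.sum_mul, Finset.mul_sum]

end Aux

/-- `LBE` and `RBE` factorize along the splitting of an inclusion
`S ⊆ T` of closed intervals of `X³` at a point `(p,q,s) ∈ S`. -/
theorem statement1 {K X : Type} [Field K] [PartialOrder X] [DecidableEq X]
    [@DecidableRel X X (· ≤ ·)] [LocallyFiniteOrder X]
    (r : Inc2 K X →ₗ[K] Inc2 K X) (lt rt : X → X → X)
    (hca : IsCoalgAuto r) (hnd : NonDeg r)
    (hind : Induces r lt rt) (hnd0 : NonDeg0 lt rt) (hbr0 : Braid0 (r0map lt rt))
    -- T = [a,b]×[c,d]×[e,f] ⊇ S = [g,h]×[i,j]×[k,l]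
    (a b c d e f g h i j k l : X)
    (hag : a ≤ g) (hgh : g ≤ h) (hhb : h ≤ b)
    (hci : c ≤ i) (hij : i ≤ j) (hjd : j ≤ d)
    (hek : e ≤ k) (hkl : k ≤ l) (hlf : l ≤ f)
    -- (p,q,s) ∈ S
    (p q s : X) (hgp : g ≤ p) (hph : p ≤ h) (hiq : i ≤ q) (hqj : q ≤ j)
    (hks : k ≤ s) (hsl : s ≤ l) :
    LBE r lt rt a b c d e f g h i j k l
      = LBE r lt rt a p c q e s g p i q k s * LBE r lt rt p b q d s f p h q j s l ∧
    RBE r lt rt a b c d e f g h i j k l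
      = RBE r lt rt a p c q e s g p i q k s * RBE r lt rt p b q d s f p h q j s l := by
  have U1 : ∀ {a' b' : X}, a' ≤ b' → ∀ c' : X, lt a' c' = lt b' c' :=
    fun h' c' => U1lem hca hnd hind h' c'
  have U2 : ∀ {c' d' : X}, c' ≤ d' → ∀ a' : X, rt a' c' = rt a' d' :=
    fun h' a' => U2lem hca hnd hind h' a'
  have mL : ∀ {c' d' : X}, c' ≤ d' → ∀ a' : X, lt a' c' ≤ lt a' d' :=
    fun h' a' => mL2lem hca hnd hind h' a'
  have mR : ∀ {a' b' : X}, a' ≤ b' → ∀ c' : X, rt a' c' ≤ rt b' c' :=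
    fun h' c' => mR1lem hca hnd hind h' c'
  have br1 : ∀ a' c' e' : X, lt (lt a' c') (lt (rt a' c') e') = lt a' (lt c' e') :=
    fun a' c' e' => (braid_ids hbr0 a' c' e').1
  have br3 : ∀ a' c' e' : X, rt (rt a' c') e' = rt (rt a' (lt c' e')) (rt c' e') :=
    fun a' c' e' => (braid_ids hbr0 a' c' e').2
  have hap' : a ≤ p := hag.trans hgp
  have hpb' : p ≤ b := hph.trans hhb
  have hcq' : c ≤ q := hci.trans hiq
  have hqd' : q ≤ d := hqj.trans hjd
  have hes' : e ≤ s := hek.trans hks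
  have hsf' : s ≤ f := hsl.trans hlf
  have hcj : c ≤ j := hci.trans hij
  constructor
  · -- LBE factorization
    simp only [LBE, Finset.Icc_self, Finset.sum_singleton]
    refine Eq.trans ?_ (sum6_factor
      (fun x w u =>
        lam r a p c q (lt a w) (lt a q) (rt x c) (rt p c) *
        lam r (rt x c) (rt p c) e s (lt (rt x c) u) (lt (rt x c) s)
          (rt (rt g c) e) (rt (rt p c) e) *
        lam r (lt a w) (lt a q) (lt (rt x c) u) (lt (rt x c) s)
          (lt a (lt c k)) (lt a (lt c s))
          (rt (lt a i) (lt (rt a i) e)) (rt (lt a q) (lt (rt a q) e)))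
      (fun y z v =>
        lam r p b q d (lt p q) (lt p z) (rt p q) (rt y q) *
        lam r (rt p q) (rt y q) s f (lt (rt p q) s) (lt (rt p q) v)
          (rt (rt p q) s) (rt (rt h q) s) *
        lam r (lt p q) (lt p z) (lt (rt p q) s) (lt (rt p q) v)
          (lt p (lt q s)) (lt p (lt q l))
          (rt (lt p q) (lt (rt p q) s)) (rt (lt p j) (lt (rt p j) s))))
    refine Finset.sum_congr rfl fun x hx => Finset.sum_congr rfl fun y hy =>
      Finset.sum_congr rfl fun w hw => Finset.sum_congr rfl fun z hz =>
      Finset.sum_congr rfl fun u hu => Finset.sum_congr rfl fun v hv => ?_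
    obtain ⟨hax, hxg⟩ := Finset.mem_Icc.mp hx
    obtain ⟨hhy, hyb⟩ := Finset.mem_Icc.mp hy
    obtain ⟨hcw, hwi⟩ := Finset.mem_Icc.mp hw
    obtain ⟨hjz, hzd⟩ := Finset.mem_Icc.mp hz
    obtain ⟨heu, huk⟩ := Finset.mem_Icc.mp hu
    obtain ⟨hlv, hvf⟩ := Finset.mem_Icc.mp hv
    have eM : lt (lt a w) (lt (rt x c) s) = lt a (lt c s) := by
      rw [← U1 (mL hcw a) (lt (rt x c) s), ← U1 (mR hax c) s]
      exact br1 a c s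
    have eN : rt (lt a q) (lt (rt x c) u) = rt (lt a q) (lt (rt a q) e) := by
      rw [← U1 (mR hax c) u, ← U2 (mL heu (rt a c)) (lt a q), U2 hcq' a]
    have hT1 := split1 hca hnd hind hnd0 hap' hpb' hcq' hqd'
      (mL (hwi.trans hiq) a) (mL (hqj.trans hjz) a)
      (mR (hxg.trans hgp) c) (mR (hph.trans hhy) c)
    have hT2 := split1 hca hnd hind hnd0
      (mR (hxg.trans hgp) c) (mR (hph.trans hhy) c) hes' hsf'
      (mL (huk.trans hks) (rt x c)) (mL (hsl.trans hlv) (rt x c))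
      (mR (mR hgp c) e) (mR (mR hph c) e)
    have hE3 : lt a (lt c k) ≤ lt (lt a w) (lt (rt x c) s) := by
      rw [eM]
      exact mL (mL hks c) a
    have hF3 : lt (lt a w) (lt (rt x c) s) ≤ lt a (lt c l) := by
      rw [eM]
      exact mL (mL hsl c) a
    have hG3 : rt (lt a i) (lt (rt a i) e) ≤ rt (lt a q) (lt (rt x c) u) := by
      rw [eN, show rt a i = rt a c from (U2 hci a).symm,
        show rt a q = rt a c from (U2 hcq' a).symm]
      exact mR (mL hiq a) (lt (rt a c) e)
    have hH3 : rt (lt a q) (lt (rt x c) u) ≤ rt (lt a j) (lt (rt a j) e) := by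
      rw [eN, show rt a q = rt a c from (U2 hcq' a).symm,
        show rt a j = rt a c from (U2 hcj a).symm]
      exact mR (mL hqj a) (lt (rt a c) e)
    have hT3 := split1 hca hnd hind hnd0
      (mL (hwi.trans hiq) a) (mL (hqj.trans hjz) a)
      (mL (huk.trans hks) (rt x c)) (mL (hsl.trans hlv) (rt x c))
      hE3 hF3 hG3 hH3
    rw [hT1, hT2, hT3, eM, eN]
    have g1 : lt p q = lt a q := (U1 hap' q).symm
    have g2 : lt p z = lt a z := (U1 hap' z).symm
    have g3 : lt p j = lt a j := (U1 hap' j).symm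
    have g4 : rt p q = rt p c := (U2 hcq' p).symm
    have g5 : rt p j = rt p c := (U2 hcj p).symm
    have g6 : rt y q = rt y c := (U2 hcq' y).symm
    have g7 : rt h q = rt h c := (U2 hcq' h).symm
    have g8 : lt q s = lt c s := (U1 hcq' s).symm
    have g9 : lt q l = lt c l := (U1 hcq' l).symm
    have g10 : lt (rt p c) s = lt (rt x c) s :=
      ((U1 (mR hap' c) s).symm).trans (U1 (mR hax c) s)
    have g11 : lt (rt p c) v = lt (rt x c) v :=
      ((U1 (mR hap' c) v).symm).trans (U1 (mR hax c) v)
    have g12 : rt (rt p c) s = rt (rt p c) e := (U2 hes' (rt p c)).symm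
    have g13 : rt (rt h c) s = rt (rt h c) e := (U2 hes' (rt h c)).symm
    have g14 : lt p (lt c s) = lt a (lt c s) := (U1 hap' (lt c s)).symm
    have g15 : lt p (lt c l) = lt a (lt c l) := (U1 hap' (lt c l)).symm
    have g16 : rt (lt a q) (lt (rt x c) s) = rt (lt a q) (lt (rt a q) e) := by
      rw [← U1 (mR hax c) s, ← U2 (mL hes' (rt a c)) (lt a q), U2 hcq' a]
    have g17 : rt (lt a j) (lt (rt x c) s) = rt (lt a j) (lt (rt a j) e) := by
      rw [← U1 (mR hax c) s, ← U2 (mL hes' (rt a c)) (lt a j), U2 hcj a]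
    rw [g1, g2, g3, g4, g5, g6, g7, g8, g9, g10, g11, g12, g13, g14, g15, g16, g17]
    ring
  · -- RBE factorization
    simp only [RBE, Finset.Icc_self, Finset.sum_singleton]
    refine Eq.trans ?_ (sum6_factor
      (fun x w u =>
        lam r c q e s (lt c u) (lt c s) (rt w e) (rt q e) *
        lam r a p (lt c u) (lt c s) (lt a (lt c k)) (lt a (lt c s))
          (rt x (lt c u)) (rt p (lt c u)) *
        lam r (rt x (lt c u)) (rt p (lt c u)) (rt w e) (rt q e)
          (lt (rt a (lt i e)) (rt i e)) (lt (rt a (lt q e)) (rt q e))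
          (rt (rt g c) e) (rt (rt p c) e))
      (fun y z v =>
        lam r q d s f (lt q s) (lt q v) (rt q s) (rt z s) *
        lam r p b (lt q s) (lt q v) (lt p (lt q s)) (lt p (lt q l))
          (rt p (lt q s)) (rt y (lt q s)) *
        lam r (rt p (lt q s)) (rt y (lt q s)) (rt q s) (rt z s)
          (lt (rt p (lt q s)) (rt q s)) (lt (rt p (lt j s)) (rt j s))
          (rt (rt p q) s) (rt (rt h q) s)))
    refine Finset.sum_congr rfl fun x hx => Finset.sum_congr rfl fun y hy =>
      Finset.sum_congr rfl fun w hw => Finset.sum_congr rfl fun z hz =>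
      Finset.sum_congr rfl fun u hu => Finset.sum_congr rfl fun v hv => ?_
    obtain ⟨hax, hxg⟩ := Finset.mem_Icc.mp hx
    obtain ⟨hhy, hyb⟩ := Finset.mem_Icc.mp hy
    obtain ⟨hcw, hwi⟩ := Finset.mem_Icc.mp hw
    obtain ⟨hjz, hzd⟩ := Finset.mem_Icc.mp hz
    obtain ⟨heu, huk⟩ := Finset.mem_Icc.mp hu
    obtain ⟨hlv, hvf⟩ := Finset.mem_Icc.mp hv
    have eM2 : lt (rt x (lt c u)) (rt q e) = lt (rt a (lt c e)) (rt q e) := by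
      rw [← U2 (mL heu c) x, ← U1 (mR hax (lt c e)) (rt q e)]
    have eN2 : rt (rt p (lt c u)) (rt w e) = rt (rt p c) e := by
      rw [← U2 (mL heu c) p, ← U2 (mR hcw e) (rt p (lt c e))]
      exact (br3 p c e).symm
    have hR1 := split1 hca hnd hind hnd0 hcq' hqd' hes' hsf'
      (mL (huk.trans hks) c) (mL (hsl.trans hlv) c)
      (mR (hwi.trans hiq) e) (mR (hqj.trans hjz) e)
    have hR2 := split1 hca hnd hind hnd0 hap' hpb'
      (mL (huk.trans hks) c) (mL (hsl.trans hlv) c)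
      (mL (mL hks c) a) (mL (mL hsl c) a)
      (mR (hxg.trans hgp) (lt c u)) (mR (hph.trans hhy) (lt c u))
    have hE3R : lt (rt a (lt i e)) (rt i e) ≤ lt (rt x (lt c u)) (rt q e) := by
      rw [eM2, show lt i e = lt c e from (U1 hci e).symm]
      exact mL (mR hiq e) (rt a (lt c e))
    have hF3R : lt (rt x (lt c u)) (rt q e) ≤ lt (rt a (lt j e)) (rt j e) := by
      rw [eM2, show lt j e = lt c e from (U1 hcj e).symm]
      exact mL (mR hqj e) (rt a (lt c e))
    have hG3R : rt (rt g c) e ≤ rt (rt p (lt c u)) (rt w e) := by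
      rw [eN2]
      exact mR (mR hgp c) e
    have hH3R : rt (rt p (lt c u)) (rt w e) ≤ rt (rt h c) e := by
      rw [eN2]
      exact mR (mR hph c) e
    have hR3 := split1 hca hnd hind hnd0
      (mR (hxg.trans hgp) (lt c u)) (mR (hph.trans hhy) (lt c u))
      (mR (hwi.trans hiq) e) (mR (hqj.trans hjz) e)
      hE3R hF3R hG3R hH3R
    rw [hR1, hR2, hR3, eM2, eN2]
    have k1 : lt q e = lt c e := (U1 hcq' e).symm
    have k2 : lt q s = lt c s := (U1 hcq' s).symm
    have k3 : lt q v = lt c v := (U1 hcq' v).symm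
    have k6 : lt q l = lt c l := (U1 hcq' l).symm
    have k11 : lt j s = lt c s := (U1 hcj s).symm
    have kj : lt j e = lt c e := (U1 hcj e).symm
    have k4 : rt q s = rt q e := (U2 hes' q).symm
    have k5 : rt z s = rt z e := (U2 hes' z).symm
    have k12 : rt j s = rt j e := (U2 hes' j).symm
    have k13 : rt p q = rt p c := (U2 hcq' p).symm
    have k15 : rt h q = rt h c := (U2 hcq' h).symm
    have k14 : rt (rt p c) s = rt (rt p c) e := (U2 hes' (rt p c)).symm
    have k16 : rt (rt h c) s = rt (rt h c) e := (U2 hes' (rt h c)).symm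
    have k7 : lt p (lt c s) = lt a (lt c s) := (U1 hap' (lt c s)).symm
    have k8 : lt p (lt c l) = lt a (lt c l) := (U1 hap' (lt c l)).symm
    have k9 : rt p (lt c s) = rt p (lt c u) := (U2 (mL (huk.trans hks) c) p).symm
    have k10 : rt y (lt c s) = rt y (lt c u) := (U2 (mL (huk.trans hks) c) y).symm
    have k17 : rt p (lt c u) = rt p (lt c e) := (U2 (mL heu c) p).symm
    have k18 : lt (rt p (lt c e)) (rt q e) = lt (rt a (lt c e)) (rt q e) :=
      (U1 (mR hap' (lt c e)) (rt q e)).symm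
    have k19 : lt (rt p (lt c e)) (rt j e) = lt (rt a (lt c e)) (rt j e) :=
      (U1 (mR hap' (lt c e)) (rt j e)).symm
    rw [k1, k2, k3, k6, k11, kj, k4, k5, k12, k13, k15, k14, k16, k7, k8, k9, k10,
      k17, k18, k19]
    ring

end BraidPaper
end

section
/- Assume X is connected and let r : D⊗D → D⊗D be a non-degenerate coalgebra automorphism that induces a non-degenerate set-theoretic solution r₀ of the braid equation on X×X, with translations given by the commuting poset automorphisms φ_l, φ_r. If r has set-type square up to height 1, then for h ∈ {r,l}, all a ≺ b in X and all c ∈ X: α_h(⁽¹⁾c⁽¹⁾)(⁽¹⁾a⁽¹⁾, ⁽¹⁾b⁽¹⁾) = α_h(c)(a,b) and β_h(⁽¹⁾c⁽¹⁾)(⁽¹⁾a⁽¹⁾, ⁽¹⁾b⁽¹⁾) = β_h(c)(a,b); that is, α_h and β_h are invariant under applying φ := φ_l∘φ_r to all arguments. -/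
open Finsupp

namespace BraidPaper

variable {K X : Type} [Field K] [PartialOrder X] [DecidableEq X]
  [@DecidableRel X X (· ≤ ·)] [LocallyFiniteOrder X]

/-! ### Auxiliary machinery -/

/-- The coefficient of `y : D ⊗ D` at `((a,b),(c,d))` (or `0` if not ordered). -/
noncomputable def co (y : Inc2 K X) (a b c d : X) : K :=
  if h1 : a ≤ b then if h2 : c ≤ d then y (⟨(a, b), h1⟩, ⟨(c, d), h2⟩) else 0 else 0

lemma co_apply (y : Inc2 K X) {a b c d : X} (h1 : a ≤ b) (h2 : c ≤ d) :
    co y a b c d = y (⟨(a, b), h1⟩, ⟨(c, d), h2⟩) := by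
  simp [co, h1, h2]

lemma lam_eq_co (r : Inc2 K X →ₗ[K] Inc2 K X) {a b c d : X} (h1 : a ≤ b) (h2 : c ≤ d)
    (e f g h : X) :
    lam r a b c d e f g h = co (r (single (⟨(a, b), h1⟩, ⟨(c, d), h2⟩) 1)) e f g h := by
  by_cases h3 : e ≤ f
  · by_cases h4 : g ≤ h
    · rw [lam, dif_pos h1, dif_pos h2, dif_pos h3, dif_pos h4, co_apply _ h3 h4]
    · rw [lam, dif_pos h1, dif_pos h2, dif_pos h3, dif_neg h4, co, dif_pos h3, dif_neg h4]
  · rw [lam, dif_pos h1, dif_pos h2, dif_neg h3, co, dif_neg h3]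

/-- One summand of `comul2` applied to a basis vector. -/
noncomputable def splitTerm (a b c d x y : X) : Inc4 K X :=
  if h : (a ≤ x ∧ x ≤ b) ∧ (c ≤ y ∧ y ≤ d) then
    single ((⟨(a, x), h.1.1⟩, ⟨(c, y), h.2.1⟩), (⟨(x, b), h.1.2⟩, ⟨(y, d), h.2.2⟩)) (1 : K)
  else 0

lemma comul2_single (a b c d : X) (hab : a ≤ b) (hcd : c ≤ d) :
    comul2 (single ((⟨(a, b), hab⟩ : Y X), (⟨(c, d), hcd⟩ : Y X)) (1 : K))
      = ∑ x ∈ Finset.Icc a b, ∑ y ∈ Finset.Icc c d, splitTerm a b c d x y := by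
  rw [comul2, Finsupp.lsum_single, LinearMap.toSpanSingleton_apply, one_smul]
  rw [← Finset.sum_attach (Finset.Icc a b)
      (fun x => ∑ y ∈ Finset.Icc c d, splitTerm (K := K) a b c d x y)]
  refine Finset.sum_congr rfl fun x _ => ?_
  rw [← Finset.sum_attach (Finset.Icc c d) (fun y => splitTerm (K := K) a b c d x.1 y)]
  refine Finset.sum_congr rfl fun y _ => ?_
  have hx := Finset.mem_Icc.mp x.2
  have hy := Finset.mem_Icc.mp y.2
  rw [splitTerm, dif_pos ⟨hx, hy⟩]

set_option linter.unusedSectionVars false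

lemma splitTerm_apply (a b c d x y : X) {p₁ m p₂ q₁ n q₂ : X}
    (h1 : p₁ ≤ m) (h2 : m ≤ p₂) (h3 : q₁ ≤ n) (h4 : n ≤ q₂) :
    splitTerm (K := K) a b c d x y
        ((⟨(p₁, m), h1⟩, ⟨(q₁, n), h3⟩), (⟨(m, p₂), h2⟩, ⟨(n, q₂), h4⟩))
      = if a = p₁ ∧ b = p₂ ∧ c = q₁ ∧ d = q₂ ∧ x = m ∧ y = n then 1 else 0 := by
  by_cases hC : a = p₁ ∧ b = p₂ ∧ c = q₁ ∧ d = q₂ ∧ x = m ∧ y = n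
  · obtain ⟨rfl, rfl, rfl, rfl, rfl, rfl⟩ := hC
    rw [if_pos ⟨rfl, rfl, rfl, rfl, rfl, rfl⟩, splitTerm, dif_pos ⟨⟨h1, h2⟩, ⟨h3, h4⟩⟩,
      Finsupp.single_apply, if_pos rfl]
  · rw [if_neg hC, splitTerm]
    split_ifs with h
    · rw [Finsupp.single_apply, if_neg]
      intro he
      apply hC
      simp only [Prod.mk.injEq, Subtype.mk.injEq] at he
      obtain ⟨⟨⟨ha, hx⟩, hc, hy⟩, ⟨hx', hb⟩, hy', hd⟩ := he
      exact ⟨ha, hb, hc, hd, hx, hy⟩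
    · simp

lemma sum_splitTerm_apply (a b c d : X) {p₁ m p₂ q₁ n q₂ : X}
    (h1 : p₁ ≤ m) (h2 : m ≤ p₂) (h3 : q₁ ≤ n) (h4 : n ≤ q₂) :
    (∑ x ∈ Finset.Icc a b, ∑ y ∈ Finset.Icc c d, splitTerm (K := K) a b c d x y)
        ((⟨(p₁, m), h1⟩, ⟨(q₁, n), h3⟩), (⟨(m, p₂), h2⟩, ⟨(n, q₂), h4⟩))
      = if a = p₁ ∧ b = p₂ ∧ c = q₁ ∧ d = q₂ then 1 else 0 := by
  rw [Finsupp.finset_sum_apply]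
  have : ∀ x ∈ Finset.Icc a b,
      (∑ y ∈ Finset.Icc c d, splitTerm (K := K) a b c d x y)
        ((⟨(p₁, m), h1⟩, ⟨(q₁, n), h3⟩), (⟨(m, p₂), h2⟩, ⟨(n, q₂), h4⟩))
      = if x = m then (if n ∈ Finset.Icc c d then
          (if a = p₁ ∧ b = p₂ ∧ c = q₁ ∧ d = q₂ then (1:K) else 0) else 0) else 0 := by
    intro x _
    rw [Finsupp.finset_sum_apply]
    have h' : ∀ y ∈ Finset.Icc c d, splitTerm (K := K) a b c d x y
        ((⟨(p₁, m), h1⟩, ⟨(q₁, n), h3⟩), (⟨(m, p₂), h2⟩, ⟨(n, q₂), h4⟩))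
        = if y = n then (if x = m then
            (if a = p₁ ∧ b = p₂ ∧ c = q₁ ∧ d = q₂ then (1:K) else 0) else 0) else 0 := by
      intro y _
      rw [splitTerm_apply a b c d x y h1 h2 h3 h4]
      split_ifs <;> tauto
    rw [Finset.sum_congr rfl h', Finset.sum_ite_eq' (Finset.Icc c d) n]
    split_ifs <;> tauto
  rw [Finset.sum_congr rfl this, Finset.sum_ite_eq' (Finset.Icc a b) m]
  by_cases hC : a = p₁ ∧ b = p₂ ∧ c = q₁ ∧ d = q₂
  · obtain ⟨rfl, rfl, rfl, rfl⟩ := hC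
    rw [if_pos (Finset.mem_Icc.mpr ⟨h1, h2⟩), if_pos (Finset.mem_Icc.mpr ⟨h3, h4⟩)]
  · rw [if_neg hC]
    split_ifs <;> rfl

lemma comul2_apply_split_s8 (f : Inc2 K X) {p₁ m p₂ q₁ n q₂ : X}
    (h1 : p₁ ≤ m) (h2 : m ≤ p₂) (h3 : q₁ ≤ n) (h4 : n ≤ q₂) :
    comul2 f ((⟨(p₁, m), h1⟩, ⟨(q₁, n), h3⟩), (⟨(m, p₂), h2⟩, ⟨(n, q₂), h4⟩))
      = f (⟨(p₁, p₂), h1.trans h2⟩, ⟨(q₁, q₂), h3.trans h4⟩) := by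
  induction f using Finsupp.induction_linear with
  | zero => simp
  | add f g hf hg => rw [map_add, Finsupp.add_apply, hf, hg, Finsupp.add_apply]
  | single pq k =>
    obtain ⟨⟨⟨a, b⟩, hab⟩, ⟨⟨c, d⟩, hcd⟩⟩ := pq
    have hs : (single ((⟨(a, b), hab⟩ : Y X), (⟨(c, d), hcd⟩ : Y X)) k)
        = k • single ((⟨(a, b), hab⟩ : Y X), (⟨(c, d), hcd⟩ : Y X)) (1 : K) := by
      rw [Finsupp.smul_single, smul_eq_mul, mul_one]
    rw [hs, map_smul, Finsupp.smul_apply, Finsupp.smul_apply, comul2_single a b c d hab hcd,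
      sum_splitTerm_apply a b c d h1 h2 h3 h4, Finsupp.single_apply]
    congr 1
    simp only [Prod.mk.injEq, Subtype.mk.injEq]
    by_cases hC : a = p₁ ∧ b = p₂ ∧ c = q₁ ∧ d = q₂
    · obtain ⟨rfl, rfl, rfl, rfl⟩ := hC
      rw [if_pos ⟨rfl, rfl, rfl, rfl⟩, if_pos ⟨⟨rfl, rfl⟩, ⟨rfl, rfl⟩⟩]
    · rw [if_neg hC, if_neg]
      intro he
      exact hC ⟨he.1.1, he.1.2, he.2.1, he.2.2⟩

lemma sum_single_pair_apply (g : Inc2 K X) (p : Y X × Y X) (a : K) (U V : Y X × Y X) :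
    (g.sum fun q b => single (p, q) (a * b)) (U, V)
      = if p = U then a * g V else 0 := by
  rw [Finsupp.sum_apply]
  have h2 : (g.sum fun q b => single (p, q) (a * b) (U, V))
      = g.sum fun q b => if q = V then (if p = U then a * b else 0) else 0 := by
    refine Finsupp.sum_congr fun q _ => ?_
    rw [Finsupp.single_apply]
    simp only [Prod.mk.injEq]
    split_ifs <;> tauto
  rw [h2, Finsupp.sum_ite_eq']
  split_ifs with hm hp hp
  · rfl
  · rfl
  · rw [Finsupp.notMem_support_iff.mp hm, mul_zero]
  · rfl

lemma tmap_single_apply (r s : Inc2 K X →ₗ[K] Inc2 K X) (P Q U V : Y X × Y X) :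
    tmap r s (single (P, Q) (1 : K)) (U, V)
      = r (single P 1) U * s (single Q 1) V := by
  rw [tmap, Finsupp.lsum_single, LinearMap.toSpanSingleton_apply, one_smul,
    Finsupp.sum_apply]
  have h1 : ((r (single P 1)).sum
        fun p a => ((s (single Q 1)).sum fun q b => single (p, q) (a * b)) (U, V))
      = (r (single P 1)).sum fun p a => if p = U then a * (s (single Q 1)) V else 0 := by
    refine Finsupp.sum_congr fun p _ => ?_
    rw [sum_single_pair_apply]
  rw [h1, Finsupp.sum_ite_eq']
  split_ifs with hm
  · rfl
  · rw [Finsupp.notMem_support_iff.mp hm, zero_mul]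

lemma eps2_single (pq : Y X × Y X) (k : K) :
    eps2 (single pq k) = if pq.1.1.1 = pq.1.1.2 ∧ pq.2.1.1 = pq.2.1.2 then k else 0 := by
  rw [eps2, Finsupp.lsum_single]
  split_ifs <;> rfl

/-- The key classification: a skew-primitive coefficient system vanishes outside
the three special points. -/
lemma classify (F : X → X → X → X → K) (u₁ u₂ w₁ w₂ : X)
    (ME : ∀ p₁ m p₂ q₁ n q₂ : X, p₁ ≤ m → m ≤ p₂ → q₁ ≤ n → n ≤ q₂ →
      F p₁ p₂ q₁ q₂ = (if u₁ = p₁ ∧ u₁ = m ∧ u₂ = q₁ ∧ u₂ = n then F m p₂ n q₂ else 0)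
        + (if w₁ = m ∧ w₁ = p₂ ∧ w₂ = n ∧ w₂ = q₂ then F p₁ m q₁ n else 0))
    (p₁ p₂ q₁ q₂ : X) (h1 : p₁ ≤ p₂) (h2 : q₁ ≤ q₂)
    (hn1 : ¬(p₁ = u₁ ∧ p₂ = w₁ ∧ q₁ = u₂ ∧ q₂ = w₂))
    (hn2 : ¬(p₁ = u₁ ∧ p₂ = u₁ ∧ q₁ = u₂ ∧ q₂ = u₂))
    (hn3 : ¬(p₁ = w₁ ∧ p₂ = w₁ ∧ q₁ = w₂ ∧ q₂ = w₂)) :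
    F p₁ p₂ q₁ q₂ = 0 := by
  by_contra hF
  have e1 := ME p₁ p₁ p₂ q₁ q₁ q₂ le_rfl h1 le_rfl h2
  have c2 : ¬(w₁ = p₁ ∧ w₁ = p₂ ∧ w₂ = q₁ ∧ w₂ = q₂) := by
    rintro ⟨ha, hb, hc, hd⟩; exact hn3 ⟨ha.symm, hb.symm, hc.symm, hd.symm⟩
  rw [if_neg c2, add_zero] at e1
  have c1 : u₁ = p₁ ∧ u₁ = p₁ ∧ u₂ = q₁ ∧ u₂ = q₁ := by
    by_contra hc1
    rw [if_neg hc1] at e1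
    exact hF e1
  obtain ⟨hp₁, -, hq₁, -⟩ := c1
  have e2 := ME p₁ p₂ p₂ q₁ q₂ q₂ h1 le_rfl h2 le_rfl
  have d1 : ¬(u₁ = p₁ ∧ u₁ = p₂ ∧ u₂ = q₁ ∧ u₂ = q₂) := by
    rintro ⟨ha, hb, hc, hd⟩; exact hn2 ⟨ha.symm, hb.symm, hc.symm, hd.symm⟩
  rw [if_neg d1, zero_add] at e2
  have d2 : w₁ = p₂ ∧ w₁ = p₂ ∧ w₂ = q₂ ∧ w₂ = q₂ := by
    by_contra hd2
    rw [if_neg hd2] at e2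
    exact hF e2
  obtain ⟨hp₂, -, hq₂, -⟩ := d2
  exact hn1 ⟨hp₁.symm, hp₂.symm, hq₁.symm, hq₂.symm⟩

lemma single_pair_apply (s₁ s₂ t₁ t₂ z₁ z₂ v₁ v₂ : X) (hs : s₁ ≤ s₂) (ht : t₁ ≤ t₂)
    (hz : z₁ ≤ z₂) (hv : v₁ ≤ v₂) :
    (single ((⟨(s₁, s₂), hs⟩ : Y X), (⟨(t₁, t₂), ht⟩ : Y X)) (1 : K))
        ((⟨(z₁, z₂), hz⟩ : Y X), (⟨(v₁, v₂), hv⟩ : Y X))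
      = if s₁ = z₁ ∧ s₂ = z₂ ∧ t₁ = v₁ ∧ t₂ = v₂ then 1 else 0 := by
  rw [Finsupp.single_apply]
  by_cases hC : s₁ = z₁ ∧ s₂ = z₂ ∧ t₁ = v₁ ∧ t₂ = v₂
  · obtain ⟨rfl, rfl, rfl, rfl⟩ := hC
    rw [if_pos rfl, if_pos ⟨rfl, rfl, rfl, rfl⟩]
  · rw [if_neg hC, if_neg]
    intro he
    apply hC
    simp only [Prod.mk.injEq, Subtype.mk.injEq] at he
    exact ⟨he.1.1, he.1.2, he.2.1, he.2.2⟩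

lemma skew_structure (r : Inc2 K X →ₗ[K] Inc2 K X)
    (hcm : comul2 ∘ₗ r = tmap r r ∘ₗ comul2) (hep : eps2 ∘ₗ r = eps2)
    {a b c d : X} (hab : a ≤ b) (hcd : c ≤ d) (hnd : ¬(a = b ∧ c = d))
    (G H : Y X × Y X)
    (hsplit : comul2 (single ((⟨(a, b), hab⟩ : Y X), (⟨(c, d), hcd⟩ : Y X)) (1 : K))
        = single (G, ((⟨(a, b), hab⟩ : Y X), (⟨(c, d), hcd⟩ : Y X))) 1
          + single ((((⟨(a, b), hab⟩ : Y X), (⟨(c, d), hcd⟩ : Y X))), H) 1)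
    {u₁ u₂ w₁ w₂ : X} (hu : u₁ ≤ w₁) (hw : u₂ ≤ w₂) (hneq : ¬(u₁ = w₁ ∧ u₂ = w₂))
    (hrG : r (single G 1)
        = single ((⟨(u₁, u₁), le_refl u₁⟩ : Y X), (⟨(u₂, u₂), le_refl u₂⟩ : Y X)) 1)
    (hrH : r (single H 1)
        = single ((⟨(w₁, w₁), le_refl w₁⟩ : Y X), (⟨(w₂, w₂), le_refl w₂⟩ : Y X)) 1) :
    r (single (⟨(a, b), hab⟩, ⟨(c, d), hcd⟩) 1)
      = co (r (single (⟨(a, b), hab⟩, ⟨(c, d), hcd⟩) 1)) u₁ w₁ u₂ w₂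
           • single ((⟨(u₁, w₁), hu⟩ : Y X), (⟨(u₂, w₂), hw⟩ : Y X)) 1
        + co (r (single (⟨(a, b), hab⟩, ⟨(c, d), hcd⟩) 1)) u₁ u₁ u₂ u₂
           • (single ((⟨(u₁, u₁), le_refl u₁⟩ : Y X), (⟨(u₂, u₂), le_refl u₂⟩ : Y X)) 1
              - single ((⟨(w₁, w₁), le_refl w₁⟩ : Y X), (⟨(w₂, w₂), le_refl w₂⟩ : Y X)) 1) := by
  set x : Y X × Y X := (⟨(a, b), hab⟩, ⟨(c, d), hcd⟩) with hxdef
  set y := r (single x 1) with hydef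
  -- the master equation
  have ME : ∀ p₁ m p₂ q₁ n q₂ : X, p₁ ≤ m → m ≤ p₂ → q₁ ≤ n → n ≤ q₂ →
      co y p₁ p₂ q₁ q₂
        = (if u₁ = p₁ ∧ u₁ = m ∧ u₂ = q₁ ∧ u₂ = n then co y m p₂ n q₂ else 0)
          + (if w₁ = m ∧ w₁ = p₂ ∧ w₂ = n ∧ w₂ = q₂ then co y p₁ m q₁ n else 0) := by
    intro p₁ m p₂ q₁ n q₂ h1 h2 h3 h4
    have hcong := LinearMap.congr_fun hcm (single x 1)
    simp only [LinearMap.comp_apply] at hcong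
    have hval := congrArg
      (fun z : Inc4 K X => z ((⟨(p₁, m), h1⟩, ⟨(q₁, n), h3⟩), (⟨(m, p₂), h2⟩, ⟨(n, q₂), h4⟩)))
      hcong
    rw [comul2_apply_split_s8 _ h1 h2 h3 h4] at hval
    rw [hsplit, map_add, Finsupp.add_apply] at hval
    rw [tmap_single_apply, tmap_single_apply, hrG, hrH, ← hydef] at hval
    rw [single_pair_apply u₁ u₁ u₂ u₂ p₁ m q₁ n (le_refl u₁) (le_refl u₂) h1 h3,
      single_pair_apply w₁ w₁ w₂ w₂ m p₂ n q₂ (le_refl w₁) (le_refl w₂) h2 h4] at hval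
    rw [co_apply y (h1.trans h2) (h3.trans h4), hval,
      co_apply y h2 h4, co_apply y h1 h3, ite_mul, one_mul, zero_mul,
      mul_ite, mul_one, mul_zero]
  -- vanishing outside the three special points
  have hvan : ∀ p₁ p₂ q₁ q₂ : X, p₁ ≤ p₂ → q₁ ≤ q₂ →
      ¬(u₁ = p₁ ∧ w₁ = p₂ ∧ u₂ = q₁ ∧ w₂ = q₂) →
      ¬(u₁ = p₁ ∧ u₁ = p₂ ∧ u₂ = q₁ ∧ u₂ = q₂) →
      ¬(w₁ = p₁ ∧ w₁ = p₂ ∧ w₂ = q₁ ∧ w₂ = q₂) →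
      co y p₁ p₂ q₁ q₂ = 0 := by
    intro p₁ p₂ q₁ q₂ h1 h2 n1 n2 n3
    refine classify (co y) u₁ u₂ w₁ w₂ ME p₁ p₂ q₁ q₂ h1 h2 ?_ ?_ ?_
    · exact fun h => n1 ⟨h.1.symm, h.2.1.symm, h.2.2.1.symm, h.2.2.2.symm⟩
    · exact fun h => n2 ⟨h.1.symm, h.2.1.symm, h.2.2.1.symm, h.2.2.2.symm⟩
    · exact fun h => n3 ⟨h.1.symm, h.2.1.symm, h.2.2.1.symm, h.2.2.2.symm⟩
  set α := co y u₁ w₁ u₂ w₂ with hα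
  set β := co y u₁ u₁ u₂ u₂ with hβ
  set γ := co y w₁ w₁ w₂ w₂ with hγ
  have repr3 : y = α • single ((⟨(u₁, w₁), hu⟩ : Y X), (⟨(u₂, w₂), hw⟩ : Y X)) 1
      + β • single ((⟨(u₁, u₁), le_refl u₁⟩ : Y X), (⟨(u₂, u₂), le_refl u₂⟩ : Y X)) 1
      + γ • single ((⟨(w₁, w₁), le_refl w₁⟩ : Y X), (⟨(w₂, w₂), le_refl w₂⟩ : Y X)) 1 := by
    ext pt
    obtain ⟨⟨⟨p₁, p₂⟩, hp⟩, ⟨⟨q₁, q₂⟩, hq⟩⟩ := pt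
    rw [Finsupp.add_apply, Finsupp.add_apply, Finsupp.smul_apply, Finsupp.smul_apply,
      Finsupp.smul_apply,
      single_pair_apply u₁ w₁ u₂ w₂ p₁ p₂ q₁ q₂ hu hw hp hq,
      single_pair_apply u₁ u₁ u₂ u₂ p₁ p₂ q₁ q₂ (le_refl u₁) (le_refl u₂) hp hq,
      single_pair_apply w₁ w₁ w₂ w₂ p₁ p₂ q₁ q₂ (le_refl w₁) (le_refl w₂) hp hq,
      smul_eq_mul, smul_eq_mul, smul_eq_mul]
    by_cases cA : u₁ = p₁ ∧ w₁ = p₂ ∧ u₂ = q₁ ∧ w₂ = q₂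
    · obtain ⟨rfl, rfl, rfl, rfl⟩ := cA
      rw [if_pos ⟨rfl, rfl, rfl, rfl⟩, if_neg, if_neg, mul_one, mul_zero, mul_zero,
        add_zero, add_zero]
      · exact (co_apply y hp hq).symm
      · rintro ⟨h1, -, h3, -⟩; exact hneq ⟨h1.symm, h3.symm⟩
      · rintro ⟨-, h2, -, h4⟩; exact hneq ⟨h2, h4⟩
    · by_cases cB : u₁ = p₁ ∧ u₁ = p₂ ∧ u₂ = q₁ ∧ u₂ = q₂
      · obtain ⟨rfl, h2, rfl, h4⟩ := cB
        rw [if_neg cA, if_pos ⟨rfl, h2, rfl, h4⟩, if_neg, mul_zero, mul_one, mul_zero,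
          zero_add, add_zero]
        · subst h2; subst h4; exact (co_apply y hp hq).symm
        · rintro ⟨h1', -, h3', -⟩; exact hneq ⟨h1'.symm, h3'.symm⟩
      · by_cases cC : w₁ = p₁ ∧ w₁ = p₂ ∧ w₂ = q₁ ∧ w₂ = q₂
        · obtain ⟨rfl, h2, rfl, h4⟩ := cC
          rw [if_neg cA, if_neg cB, if_pos ⟨rfl, h2, rfl, h4⟩, mul_zero, mul_zero, mul_one,
            zero_add, zero_add]
          subst h2; subst h4
          exact (co_apply y hp hq).symm
        · rw [if_neg cA, if_neg cB, if_neg cC, mul_zero, mul_zero, mul_zero,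
            add_zero, add_zero]
          rw [← co_apply y hp hq]
          exact hvan p₁ p₂ q₁ q₂ hp hq cA cB cC
  -- the counit relation
  have heps0 : eps2 y = 0 := by
    have h := LinearMap.congr_fun hep (single x 1)
    simp only [LinearMap.comp_apply] at h
    rw [← hydef] at h
    rw [h, eps2_single]
    rw [if_neg]
    intro hc
    exact hnd ⟨hc.1, hc.2⟩
  have hsum : β + γ = 0 := by
    have h := heps0
    rw [repr3, map_add, map_add, map_smul, map_smul, map_smul,
      eps2_single, eps2_single, eps2_single] at h
    simp only [smul_eq_mul] at h
    rw [if_neg (show ¬(u₁ = w₁ ∧ u₂ = w₂) from fun hc => hneq hc),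
      mul_zero, zero_add] at h
    simpa using h
  have hγβ : γ = -β := eq_neg_of_add_eq_zero_right hsum
  rw [repr3, hγβ, smul_sub, neg_smul, add_assoc, ← sub_eq_add_neg]

/-! ### Order-automorphism helpers -/

lemma lt_iff_map (φ : X → X) (hm : ∀ x y : X, x ≤ y ↔ φ x ≤ φ y) (x y : X) :
    x < y ↔ φ x < φ y := by
  constructor
  · intro h
    exact lt_of_le_not_ge ((hm x y).mp h.le) fun hc => h.not_ge ((hm y x).mpr hc)
  · intro h
    exact lt_of_le_not_ge ((hm x y).mpr h.le) fun hc => h.not_ge ((hm y x).mp hc)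

lemma covBy_map (φ : X → X) (hb : Function.Bijective φ)
    (hm : ∀ x y : X, x ≤ y ↔ φ x ≤ φ y) {a b : X} (h : a ⋖ b) : φ a ⋖ φ b := by
  constructor
  · exact (lt_iff_map φ hm a b).mp h.lt
  · intro z h1 h2
    obtain ⟨z', rfl⟩ := hb.2 z
    exact h.2 ((lt_iff_map φ hm a z').mpr h1) ((lt_iff_map φ hm z' b).mpr h2)

lemma Icc_pair {a b : X} (h : a ⋖ b) : Finset.Icc a b = {a, b} := by
  ext z
  simp only [Finset.mem_Icc, Finset.mem_insert, Finset.mem_singleton]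
  constructor
  · rintro ⟨h1, h2⟩
    rcases h.eq_or_eq h1 h2 with rfl | rfl
    · exact Or.inl rfl
    · exact Or.inr rfl
  · rintro (rfl | rfl)
    · exact ⟨le_rfl, h.le⟩
    · exact ⟨h.le, le_rfl⟩

lemma hgt_self (c : X) : hgt c c = 0 := by
  rw [hgt, Set.Icc_self]
  have : ({c} : Set X).chainHeight (· < ·) = 1 := by
    rw [← Set.encard_eq_chainHeight_of_isChain _ Set.subsingleton_singleton.isChain,
      Set.encard_singleton]
  rw [this]
  rfl

lemma hgt_covBy {a b : X} (h : a ⋖ b) : hgt a b = 1 := by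
  rw [hgt]
  have hIcc : Set.Icc a b = {a, b} := by
    ext z
    simp only [Set.mem_Icc, Set.mem_insert_iff, Set.mem_singleton_iff]
    constructor
    · rintro ⟨h1, h2⟩
      rcases h.eq_or_eq h1 h2 with rfl | rfl
      · exact Or.inl rfl
      · exact Or.inr rfl
    · rintro (rfl | rfl)
      · exact ⟨le_rfl, h.le⟩
      · exact ⟨h.le, le_rfl⟩
  have h1 : ({b} : Set X).chainHeight (· < ·) = 1 := by
    rw [← Set.encard_eq_chainHeight_of_isChain _ Set.subsingleton_singleton.isChain,
      Set.encard_singleton]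
  have h2 : (Set.Icc a b).chainHeight (· < ·) = 2 := by
    rw [hIcc]
    have := (Set.subsingleton_singleton (a := b)).isChain (r := (· < ·)) |>.insert
      (a := a) (by intro z hz _; rw [Set.mem_singleton_iff] at hz; subst hz; exact Or.inl h.lt)
    rw [← Set.encard_eq_chainHeight_of_isChain _ this, Set.encard_pair h.ne]
  rw [h2]
  rfl

lemma split_cover_R (a b c : X) (h : a ⋖ b) :
    comul2 (single ((⟨(a, b), h.le⟩ : Y X), (⟨(c, c), le_refl c⟩ : Y X)) (1 : K))
      = single (((⟨(a, a), le_refl a⟩ : Y X), (⟨(c, c), le_refl c⟩ : Y X)),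
                ((⟨(a, b), h.le⟩ : Y X), (⟨(c, c), le_refl c⟩ : Y X))) 1
        + single ((((⟨(a, b), h.le⟩ : Y X), (⟨(c, c), le_refl c⟩ : Y X))),
                  ((⟨(b, b), le_refl b⟩ : Y X), (⟨(c, c), le_refl c⟩ : Y X))) 1 := by
  rw [comul2_single a b c c h.le (le_refl c), Icc_pair h, Finset.Icc_self,
    Finset.sum_pair h.ne, Finset.sum_singleton, Finset.sum_singleton,
    splitTerm, splitTerm, dif_pos (⟨⟨le_refl a, h.le⟩, ⟨le_refl c, le_refl c⟩⟩ :
      (a ≤ a ∧ a ≤ b) ∧ (c ≤ c ∧ c ≤ c)),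
    dif_pos (⟨⟨h.le, le_refl b⟩, ⟨le_refl c, le_refl c⟩⟩ :
      (a ≤ b ∧ b ≤ b) ∧ (c ≤ c ∧ c ≤ c))]

lemma split_cover_L (a b c : X) (h : a ⋖ b) :
    comul2 (single ((⟨(c, c), le_refl c⟩ : Y X), (⟨(a, b), h.le⟩ : Y X)) (1 : K))
      = single (((⟨(c, c), le_refl c⟩ : Y X), (⟨(a, a), le_refl a⟩ : Y X)),
                ((⟨(c, c), le_refl c⟩ : Y X), (⟨(a, b), h.le⟩ : Y X))) 1
        + single ((((⟨(c, c), le_refl c⟩ : Y X), (⟨(a, b), h.le⟩ : Y X))),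
                  ((⟨(c, c), le_refl c⟩ : Y X), (⟨(b, b), le_refl b⟩ : Y X))) 1 := by
  rw [comul2_single c c a b (le_refl c) h.le, Icc_pair h, Finset.Icc_self,
    Finset.sum_singleton, Finset.sum_pair h.ne,
    splitTerm, splitTerm, dif_pos (⟨⟨le_refl c, le_refl c⟩, ⟨le_refl a, h.le⟩⟩ :
      (c ≤ c ∧ c ≤ c) ∧ (a ≤ a ∧ a ≤ b)),
    dif_pos (⟨⟨le_refl c, le_refl c⟩, ⟨h.le, le_refl b⟩⟩ :
      (c ≤ c ∧ c ≤ c) ∧ (a ≤ b ∧ b ≤ b))]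

lemma keyR (φl φr : X → X)
    (hlb : Function.Bijective φl) (hrb : Function.Bijective φr)
    (hlmono : ∀ x y : X, x ≤ y ↔ φl x ≤ φl y)
    (hrmono : ∀ x y : X, x ≤ y ↔ φr x ≤ φr y)
    (r : Inc2 K X →ₗ[K] Inc2 K X) (hca : IsCoalgAuto r)
    (hind : Induces r (fun _ y => φl y) (fun x _ => φr x))
    (hsq1 : SetSq1 r (fun _ y => φl y) (fun x _ => φr x))
    (a b c : X) (hab : a ⋖ b) :
    alphaR r φl φr c a b * alphaL r φl φr (φl c) (φr a) (φr b) = 1 ∧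
    alphaR r φl φr c a b * betaL r φl φr (φl c) (φr a) (φr b) + betaR r φl φr c a b = 0 := by
  have hvw : φr a ⋖ φr b := covBy_map φr hrb hrmono hab
  have hAB : φl (φr a) ⋖ φl (φr b) := covBy_map φl hlb hlmono hvw
  have hrG : r (single ((⟨(a, a), le_refl a⟩ : Y X), (⟨(c, c), le_refl c⟩ : Y X)) 1)
      = single ((⟨(φl c, φl c), le_refl (φl c)⟩ : Y X),
                (⟨(φr a, φr a), le_refl (φr a)⟩ : Y X)) 1 := hind a c
  have hrH : r (single ((⟨(b, b), le_refl b⟩ : Y X), (⟨(c, c), le_refl c⟩ : Y X)) 1)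
      = single ((⟨(φl c, φl c), le_refl (φl c)⟩ : Y X),
                (⟨(φr b, φr b), le_refl (φr b)⟩ : Y X)) 1 := hind b c
  have hstruct := skew_structure r hca.2.1 hca.2.2 hab.le (le_refl c)
      (fun hc => hab.ne hc.1) _ _ (split_cover_R a b c hab)
      (le_refl (φl c)) hvw.le (fun hc => hvw.ne hc.2) hrG hrH
  set y := r (single ((⟨(a, b), hab.le⟩ : Y X), (⟨(c, c), le_refl c⟩ : Y X)) 1) with hydef
  set α := co y (φl c) (φl c) (φr a) (φr b) with hαdef
  set β := co y (φl c) (φl c) (φr a) (φr a) with hβdef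
  have hr2 := hsq1 a b c c hab.le (le_refl c)
    (by rw [hgt_covBy hab, hgt_self, add_zero])
    ((hlmono _ _).mp hvw.le) (le_refl _)
  rw [← hydef] at hr2
  rw [hstruct, map_add, map_smul, map_smul, map_sub] at hr2
  have hGv : r (single ((⟨(φl c, φl c), le_refl (φl c)⟩ : Y X),
        (⟨(φr a, φr a), le_refl (φr a)⟩ : Y X)) 1)
      = single ((⟨(φl (φr a), φl (φr a)), le_refl _⟩ : Y X),
                (⟨(φr (φl c), φr (φl c)), le_refl _⟩ : Y X)) 1 := hind (φl c) (φr a)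
  have hGw : r (single ((⟨(φl c, φl c), le_refl (φl c)⟩ : Y X),
        (⟨(φr b, φr b), le_refl (φr b)⟩ : Y X)) 1)
      = single ((⟨(φl (φr b), φl (φr b)), le_refl _⟩ : Y X),
                (⟨(φr (φl c), φr (φl c)), le_refl _⟩ : Y X)) 1 := hind (φl c) (φr b)
  rw [hGv, hGw] at hr2
  -- evaluate at the two relevant points
  have e₁ := congrArg (fun z : Inc2 K X => z
    ((⟨(φl (φr a), φl (φr b)), hAB.le⟩ : Y X),
     (⟨(φr (φl c), φr (φl c)), le_refl (φr (φl c))⟩ : Y X))) hr2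
  have e₂ := congrArg (fun z : Inc2 K X => z
    ((⟨(φl (φr a), φl (φr a)), le_refl (φl (φr a))⟩ : Y X),
     (⟨(φr (φl c), φr (φl c)), le_refl (φr (φl c))⟩ : Y X))) hr2
  simp only [Finsupp.add_apply, Finsupp.sub_apply, Finsupp.smul_apply, smul_eq_mul] at e₁ e₂
  rw [single_pair_apply, single_pair_apply, single_pair_apply] at e₁
  rw [single_pair_apply, single_pair_apply, single_pair_apply] at e₂
  rw [if_neg (fun hc => hAB.ne hc.2.1), if_neg (fun hc => hAB.ne' hc.1),
    if_pos ⟨rfl, rfl, rfl, rfl⟩] at e₁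
  rw [if_pos ⟨rfl, rfl, rfl, rfl⟩, if_neg (fun hc => hAB.ne' hc.1),
    if_neg (fun hc => hAB.ne' hc.2.1)] at e₂
  -- identify the remaining coefficient with alphaL / betaL
  have hαL : (r (single ((⟨(φl c, φl c), le_refl (φl c)⟩ : Y X),
        (⟨(φr a, φr b), hvw.le⟩ : Y X)) 1))
        ((⟨(φl (φr a), φl (φr b)), hAB.le⟩ : Y X),
         (⟨(φr (φl c), φr (φl c)), le_refl (φr (φl c))⟩ : Y X))
      = alphaL r φl φr (φl c) (φr a) (φr b) := by
    rw [alphaL, lam_eq_co r (le_refl (φl c)) hvw.le,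
      co_apply _ hAB.le (le_refl (φr (φl c)))]
  have hβL : (r (single ((⟨(φl c, φl c), le_refl (φl c)⟩ : Y X),
        (⟨(φr a, φr b), hvw.le⟩ : Y X)) 1))
        ((⟨(φl (φr a), φl (φr a)), le_refl (φl (φr a))⟩ : Y X),
         (⟨(φr (φl c), φr (φl c)), le_refl (φr (φl c))⟩ : Y X))
      = betaL r φl φr (φl c) (φr a) (φr b) := by
    rw [betaL, lam_eq_co r (le_refl (φl c)) hvw.le,
      co_apply _ (le_refl (φl (φr a))) (le_refl (φr (φl c)))]
  rw [hαL] at e₁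
  rw [hβL] at e₂
  have hαR : alphaR r φl φr c a b = α := by
    rw [alphaR, hαdef, hydef, lam_eq_co r hab.le (le_refl c)]
  have hβR : betaR r φl φr c a b = β := by
    rw [betaR, hβdef, hydef, lam_eq_co r hab.le (le_refl c)]
  constructor
  · rw [hαR]
    calc α * alphaL r φl φr (φl c) (φr a) (φr b)
        = α * alphaL r φl φr (φl c) (φr a) (φr b) + β * (0 - 0) := by ring
      _ = 1 := e₁
  · rw [hαR, hβR]
    calc α * betaL r φl φr (φl c) (φr a) (φr b) + β
        = α * betaL r φl φr (φl c) (φr a) (φr b) + β * (1 - 0) := by ring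
      _ = 0 := e₂

lemma keyL (φl φr : X → X)
    (hlb : Function.Bijective φl) (hrb : Function.Bijective φr)
    (hlmono : ∀ x y : X, x ≤ y ↔ φl x ≤ φl y)
    (hrmono : ∀ x y : X, x ≤ y ↔ φr x ≤ φr y)
    (r : Inc2 K X →ₗ[K] Inc2 K X) (hca : IsCoalgAuto r)
    (hind : Induces r (fun _ y => φl y) (fun x _ => φr x))
    (hsq1 : SetSq1 r (fun _ y => φl y) (fun x _ => φr x))
    (a b c : X) (hab : a ⋖ b) :
    alphaL r φl φr c a b * alphaR r φl φr (φr c) (φl a) (φl b) = 1 ∧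
    alphaL r φl φr c a b * betaR r φl φr (φr c) (φl a) (φl b) + betaL r φl φr c a b = 0 := by
  have hvw : φl a ⋖ φl b := covBy_map φl hlb hlmono hab
  have hAB : φr (φl a) ⋖ φr (φl b) := covBy_map φr hrb hrmono hvw
  have hrG : r (single ((⟨(c, c), le_refl c⟩ : Y X), (⟨(a, a), le_refl a⟩ : Y X)) 1)
      = single ((⟨(φl a, φl a), le_refl (φl a)⟩ : Y X),
                (⟨(φr c, φr c), le_refl (φr c)⟩ : Y X)) 1 := hind c a
  have hrH : r (single ((⟨(c, c), le_refl c⟩ : Y X), (⟨(b, b), le_refl b⟩ : Y X)) 1)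
      = single ((⟨(φl b, φl b), le_refl (φl b)⟩ : Y X),
                (⟨(φr c, φr c), le_refl (φr c)⟩ : Y X)) 1 := hind c b
  have hstruct := skew_structure r hca.2.1 hca.2.2 (le_refl c) hab.le
      (fun hc => hab.ne hc.2) _ _ (split_cover_L a b c hab)
      hvw.le (le_refl (φr c)) (fun hc => hvw.ne hc.1) hrG hrH
  set y := r (single ((⟨(c, c), le_refl c⟩ : Y X), (⟨(a, b), hab.le⟩ : Y X)) 1) with hydef
  set α := co y (φl a) (φl b) (φr c) (φr c) with hαdef
  set β := co y (φl a) (φl a) (φr c) (φr c) with hβdef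
  have hr2 := hsq1 c c a b (le_refl c) hab.le
    (by rw [hgt_covBy hab, hgt_self, zero_add])
    (le_refl _) ((hrmono _ _).mp hvw.le)
  rw [← hydef] at hr2
  rw [hstruct, map_add, map_smul, map_smul, map_sub] at hr2
  have hGv : r (single ((⟨(φl a, φl a), le_refl (φl a)⟩ : Y X),
        (⟨(φr c, φr c), le_refl (φr c)⟩ : Y X)) 1)
      = single ((⟨(φl (φr c), φl (φr c)), le_refl _⟩ : Y X),
                (⟨(φr (φl a), φr (φl a)), le_refl _⟩ : Y X)) 1 := hind (φl a) (φr c)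
  have hGw : r (single ((⟨(φl b, φl b), le_refl (φl b)⟩ : Y X),
        (⟨(φr c, φr c), le_refl (φr c)⟩ : Y X)) 1)
      = single ((⟨(φl (φr c), φl (φr c)), le_refl _⟩ : Y X),
                (⟨(φr (φl b), φr (φl b)), le_refl _⟩ : Y X)) 1 := hind (φl b) (φr c)
  rw [hGv, hGw] at hr2
  have e₁ := congrArg (fun z : Inc2 K X => z
    ((⟨(φl (φr c), φl (φr c)), le_refl (φl (φr c))⟩ : Y X),
     (⟨(φr (φl a), φr (φl b)), hAB.le⟩ : Y X))) hr2
  have e₂ := congrArg (fun z : Inc2 K X => z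
    ((⟨(φl (φr c), φl (φr c)), le_refl (φl (φr c))⟩ : Y X),
     (⟨(φr (φl a), φr (φl a)), le_refl (φr (φl a))⟩ : Y X))) hr2
  simp only [Finsupp.add_apply, Finsupp.sub_apply, Finsupp.smul_apply, smul_eq_mul] at e₁ e₂
  rw [single_pair_apply, single_pair_apply, single_pair_apply] at e₁
  rw [single_pair_apply, single_pair_apply, single_pair_apply] at e₂
  rw [if_neg (fun hc => hAB.ne hc.2.2.2), if_neg (fun hc => hAB.ne' hc.2.2.1),
    if_pos ⟨rfl, rfl, rfl, rfl⟩] at e₁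
  rw [if_pos ⟨rfl, rfl, rfl, rfl⟩, if_neg (fun hc => hAB.ne' hc.2.2.1),
    if_neg (fun hc => hAB.ne' hc.2.2.2)] at e₂
  have hαR : (r (single ((⟨(φl a, φl b), hvw.le⟩ : Y X),
        (⟨(φr c, φr c), le_refl (φr c)⟩ : Y X)) 1))
        ((⟨(φl (φr c), φl (φr c)), le_refl (φl (φr c))⟩ : Y X),
         (⟨(φr (φl a), φr (φl b)), hAB.le⟩ : Y X))
      = alphaR r φl φr (φr c) (φl a) (φl b) := by
    rw [alphaR, lam_eq_co r hvw.le (le_refl (φr c)),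
      co_apply _ (le_refl (φl (φr c))) hAB.le]
  have hβR : (r (single ((⟨(φl a, φl b), hvw.le⟩ : Y X),
        (⟨(φr c, φr c), le_refl (φr c)⟩ : Y X)) 1))
        ((⟨(φl (φr c), φl (φr c)), le_refl (φl (φr c))⟩ : Y X),
         (⟨(φr (φl a), φr (φl a)), le_refl (φr (φl a))⟩ : Y X))
      = betaR r φl φr (φr c) (φl a) (φl b) := by
    rw [betaR, lam_eq_co r hvw.le (le_refl (φr c)),
      co_apply _ (le_refl (φl (φr c))) (le_refl (φr (φl a)))]
  rw [hαR] at e₁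
  rw [hβR] at e₂
  have hαL : alphaL r φl φr c a b = α := by
    rw [alphaL, hαdef, hydef, lam_eq_co r (le_refl c) hab.le]
  have hβL : betaL r φl φr c a b = β := by
    rw [betaL, hβdef, hydef, lam_eq_co r (le_refl c) hab.le]
  constructor
  · rw [hαL]
    calc α * alphaR r φl φr (φr c) (φl a) (φl b)
        = α * alphaR r φl φr (φr c) (φl a) (φl b) + β * (0 - 0) := by ring
      _ = 1 := e₁
  · rw [hαL, hβL]
    calc α * betaR r φl φr (φr c) (φl a) (φl b) + β
        = α * betaR r φl φr (φr c) (φl a) (φl b) + β * (1 - 0) := by ring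
      _ = 0 := e₂

/-- if `r` has set-type square up to height 1, then the `α`'s and
`β`'s are invariant under applying `φ := φ_l ∘ φ_r` to all arguments. -/
theorem statement8 {K X : Type} [Field K] [PartialOrder X] [DecidableEq X]
    [@DecidableRel X X (· ≤ ·)] [LocallyFiniteOrder X]
    (hconn : Connected X)
    (φl φr : X → X)
    (hlb : Function.Bijective φl) (hrb : Function.Bijective φr)
    (hlmono : ∀ x y : X, x ≤ y ↔ φl x ≤ φl y)
    (hrmono : ∀ x y : X, x ≤ y ↔ φr x ≤ φr y)
    (hcomm : ∀ x : X, φl (φr x) = φr (φl x))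
    (r : Inc2 K X →ₗ[K] Inc2 K X)
    (hca : IsCoalgAuto r) (hnd : NonDeg r)
    (hind : Induces r (fun _ y => φl y) (fun x _ => φr x))
    (hnd0 : NonDeg0 (fun _ y => φl y) (fun x _ => φr x))
    (hbr0 : Braid0 (r0map (fun _ y => φl y) (fun x _ => φr x)))
    (hsq1 : SetSq1 r (fun _ y => φl y) (fun x _ => φr x)) :
    ∀ a b c : X, a ⋖ b →
      (alphaR r φl φr (φl (φr c)) (φl (φr a)) (φl (φr b)) = alphaR r φl φr c a b ∧
       betaR r φl φr (φl (φr c)) (φl (φr a)) (φl (φr b)) = betaR r φl φr c a b ∧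
       alphaL r φl φr (φl (φr c)) (φl (φr a)) (φl (φr b)) = alphaL r φl φr c a b ∧
       betaL r φl φr (φl (φr c)) (φl (φr a)) (φl (φr b)) = betaL r φl φr c a b) := by
  intro a b c hab
  have habr : φr a ⋖ φr b := covBy_map φr hrb hrmono hab
  have habl : φl a ⋖ φl b := covBy_map φl hlb hlmono hab
  have kR := keyR φl φr hlb hrb hlmono hrmono r hca hind hsq1 a b c hab
  have kL := keyL φl φr hlb hrb hlmono hrmono r hca hind hsq1 a b c hab
  have kR' := keyR φl φr hlb hrb hlmono hrmono r hca hind hsq1 (φl a) (φl b) (φr c) habl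
  have kL' := keyL φl φr hlb hrb hlmono hrmono r hca hind hsq1 (φr a) (φr b) (φl c) habr
  rw [← hcomm c] at kL'
  rw [← hcomm a, ← hcomm b] at kR'
  obtain ⟨kR1, kR2⟩ := kR
  obtain ⟨kL1, kL2⟩ := kL
  obtain ⟨kR'1, kR'2⟩ := kR'
  obtain ⟨kL'1, kL'2⟩ := kL'
  refine ⟨?_, ?_, ?_, ?_⟩
  · calc alphaR r φl φr (φl (φr c)) (φl (φr a)) (φl (φr b))
        = 1 * alphaR r φl φr (φl (φr c)) (φl (φr a)) (φl (φr b)) := (one_mul _).symm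
      _ = (alphaR r φl φr c a b * alphaL r φl φr (φl c) (φr a) (φr b)) *
            alphaR r φl φr (φl (φr c)) (φl (φr a)) (φl (φr b)) := by rw [kR1]
      _ = alphaR r φl φr c a b * (alphaL r φl φr (φl c) (φr a) (φr b) *
            alphaR r φl φr (φl (φr c)) (φl (φr a)) (φl (φr b))) := mul_assoc _ _ _
      _ = alphaR r φl φr c a b * 1 := by rw [kL'1]
      _ = alphaR r φl φr c a b := mul_one _
  · linear_combination (- betaR r φl φr (φl (φr c)) (φl (φr a)) (φl (φr b))) * kR1
      + alphaR r φl φr c a b * kL'2 - kR2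
  · calc alphaL r φl φr (φl (φr c)) (φl (φr a)) (φl (φr b))
        = 1 * alphaL r φl φr (φl (φr c)) (φl (φr a)) (φl (φr b)) := (one_mul _).symm
      _ = (alphaL r φl φr c a b * alphaR r φl φr (φr c) (φl a) (φl b)) *
            alphaL r φl φr (φl (φr c)) (φl (φr a)) (φl (φr b)) := by rw [kL1]
      _ = alphaL r φl φr c a b * (alphaR r φl φr (φr c) (φl a) (φl b) *
            alphaL r φl φr (φl (φr c)) (φl (φr a)) (φl (φr b))) := mul_assoc _ _ _
      _ = alphaL r φl φr c a b * 1 := by rw [kR'1]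
      _ = alphaL r φl φr c a b := mul_one _
  · linear_combination (- betaL r φl φr (φl (φr c)) (φl (φr a)) (φl (φr b))) * kL1
      + alphaL r φl φr c a b * kR'2 - kL2

end BraidPaper
end
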